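/- arXiv:0711.4100 — 3 statements merged into one kernel-verified Lean document; each statement's English description precedes it below -/
import Mathlib

section
/- For every ε > 0 there exists N such that for all integers n ≥ N, v(n) ≤ n^{3/4 + ε}. -/
open Filter MeasureTheory

noncomputable section

/-- The set `G_n = {(a,b) : 1 ≤ a,b ≤ n-1, ab ≡ 1 (mod n)}` as a set of points in `ℝ²`. -/
def modPoints (n : ℕ) : Set (ℝ × ℝ) :=
  {p | ∃ a b : ℤ, 1 ≤ a ∧ a ≤ (n : ℤ) - 1 ∧ 1 ≤ b ∧ b ≤ (n : ℤ) - 1 ∧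
    (n : ℤ) ∣ a * b - 1 ∧ p = ((a : ℝ), (b : ℝ))}

/-- The convex closure `C_n` of `G_n`. -/
def modHull (n : ℕ) : Set (ℝ × ℝ) := convexHull ℝ (modPoints n)

/-- The set of vertices (extreme points) of `C_n`. -/
def modVertices (n : ℕ) : Set (ℝ × ℝ) := Set.extremePoints ℝ (modHull n)

/-- `v(n)`, the number of vertices of `C_n`. -/
def numVertices (n : ℕ) : ℕ := (modVertices n).ncard

namespace Vx


/-- cast a lattice point to the plane -/
def R (q : ℤ × ℤ) : ℝ × ℝ := ((q.1 : ℝ), (q.2 : ℝ))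

lemma R_inj : Function.Injective R := by
  intro p q h
  simp only [R, Prod.ext_iff] at h
  exact Prod.ext (by exact_mod_cast h.1) (by exact_mod_cast h.2)

/-- cross: sign of middle point `p` relative to chord from `q` to `r` -/
def X (q p r : ℤ × ℤ) : ℤ := (r.1 - q.1) * (p.2 - q.2) - (r.2 - q.2) * (p.1 - q.1)

/-- height of the chord from q to r at abscissa x -/
noncomputable def ht (q r : ℤ × ℤ) (x : ℤ) : ℝ :=
  ((q.2 : ℝ) * ((r.1 : ℝ) - (x : ℝ)) + (r.2 : ℝ) * ((x : ℝ) - (q.1 : ℝ))) / ((r.1 : ℝ) - (q.1 : ℝ))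

lemma ht_mem {q r : ℤ × ℤ} {x : ℤ} (h1 : q.1 ≤ x) (h2 : x ≤ r.1) (h3 : q.1 < r.1) :
    ((x : ℝ), ht q r x) ∈ segment ℝ (R q) (R r) := by
  have hd : (0:ℝ) < (r.1 : ℝ) - (q.1 : ℝ) := by
    have : (q.1:ℝ) < r.1 := by exact_mod_cast h3
    linarith
  refine ⟨((r.1:ℝ) - x) / ((r.1:ℝ) - q.1), ((x:ℝ) - q.1) / ((r.1:ℝ) - q.1), ?_, ?_, ?_, ?_⟩
  · apply div_nonneg _ hd.le
    have : (x:ℝ) ≤ r.1 := by exact_mod_cast h2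
    linarith
  · apply div_nonneg _ hd.le
    have : (q.1:ℝ) ≤ x := by exact_mod_cast h1
    linarith
  · field_simp; ring
  · simp only [R, Prod.smul_mk, smul_eq_mul, Prod.mk_add_mk, Prod.ext_iff, ht]
    constructor
    · field_simp; ring
    · field_simp

lemma X_cast {q p r : ℤ × ℤ} (h : q.1 < r.1) :
    (X q p r : ℝ) = ((r.1:ℝ) - q.1) * ((p.2:ℝ) - ht q r p.1) := by
  have hd : ((r.1 : ℝ) - (q.1 : ℝ)) ≠ 0 := by
    have : (q.1:ℝ) < r.1 := by exact_mod_cast h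
    linarith
  simp only [X, ht]
  push_cast
  field_simp
  ring




lemma vert_openSegment {x y h h' : ℝ} (h1 : h < y) (h2 : y < h') :
    (x, y) ∈ openSegment ℝ (x, h) (x, h') := by
  have hd : (0:ℝ) < h' - h := by linarith
  refine ⟨(h' - y)/(h' - h), (y - h)/(h' - h), div_pos (by linarith) hd, div_pos (by linarith) hd, by field_simp; ring, ?_⟩
  simp only [Prod.smul_mk, smul_eq_mul, Prod.mk_add_mk, Prod.ext_iff]
  constructor
  · field_simp; ring
  · field_simp; ring

lemma extreme_con {S : Set (ℝ × ℝ)} {p c c' : ℝ × ℝ}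
    (hp : p ∈ Set.extremePoints ℝ (convexHull ℝ S))
    (hc : c ∈ convexHull ℝ S) (hc' : c' ∈ convexHull ℝ S)
    (hseg : p ∈ openSegment ℝ c c') (hne : c ≠ p) : False :=
  hne (hp.2 hc hc' hseg)

lemma extreme_con' {S : Set (ℝ × ℝ)} {p c c' : ℝ × ℝ}
    (hp : p ∈ Set.extremePoints ℝ (convexHull ℝ S))
    (hc : c ∈ convexHull ℝ S) (hc' : c' ∈ convexHull ℝ S)
    (hseg : p ∈ segment ℝ c c') (hne : c ≠ p) (hne' : c' ≠ p) : False := by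
  rw [mem_extremePoints_iff_forall_segment] at hp
  rcases hp.2 _ hc _ hc' hseg with h | h
  · exact hne h
  · exact hne' h




lemma down (S : Finset ℕ) (h : ∀ i ∈ S, ∀ j < i, j ∈ S) : S = Finset.range S.card := by
  ext i
  simp only [Finset.mem_range]
  constructor
  · intro hi
    have hsub : Finset.range (i + 1) ⊆ S := by
      intro j hj
      simp only [Finset.mem_range] at hj
      rcases Nat.lt_succ_iff_lt_or_eq.1 hj with h' | rfl
      · exact h i hi j h'
      · exact hi
    calc i < i + 1 := Nat.lt_succ_self i
      _ = (Finset.range (i+1)).card := (Finset.card_range _).symm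
      _ ≤ S.card := Finset.card_le_card hsub
  · intro hi
    by_contra hiS
    have hsub : S ⊆ Finset.range i := by
      intro j hj
      simp only [Finset.mem_range]
      by_contra hji
      push_neg at hji
      rcases eq_or_lt_of_le hji with rfl | h'
      · exact hiS hj
      · exact hiS (h j hj i h')
    have := Finset.card_le_card hsub
    simp only [Finset.card_range] at this
    omega

def rL (p q : ℤ × ℤ) : Prop := p.1 < q.1 ∨ (p.1 = q.1 ∧ p.2 ≤ q.2)

lemma rL_def (p q : ℤ × ℤ) : rL p q ↔ p.1 < q.1 ∨ (p.1 = q.1 ∧ p.2 ≤ q.2) := Iff.rfl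

instance : DecidableRel rL := fun p q => by unfold rL; infer_instance
instance : IsTrans (ℤ × ℤ) rL := ⟨fun a b c h1 h2 => by rw [rL_def] at *; omega⟩
instance : IsAntisymm (ℤ × ℤ) rL :=
  ⟨fun a b h1 h2 => by rw [rL_def] at *; rw [Prod.ext_iff]; omega⟩
instance : IsTotal (ℤ × ℤ) rL := ⟨fun a b => by rw [rL_def, rL_def]; omega⟩

lemma chainBound (K : ℕ) (C : Finset (ℤ × ℤ))
    (hx : ∀ p ∈ C, 0 ≤ p.1 ∧ p.1 ≤ (K : ℤ))
    (hy : ∀ p ∈ C, |p.2| ≤ (K : ℤ))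
    (hxinj : ∀ p ∈ C, ∀ q ∈ C, p.1 = q.1 → p = q)
    (hconc : ∀ p ∈ C, ∀ q ∈ C, ∀ r ∈ C, p.1 < q.1 → q.1 < r.1 → 0 < X p q r)
    (t : ℕ) :
    ((C.card : ℤ) - 1 - t * (2 * t + 1)) * ((t : ℤ) + 1) ≤ 5 * K := by
  rcases le_or_gt C.card 1 with hk1 | hk1
  · have h1 : ((C.card : ℤ) - 1 - t * (2 * t + 1)) ≤ 0 := by
      have : (C.card : ℤ) ≤ 1 := by exact_mod_cast hk1
      nlinarith [sq_nonneg (t:ℤ), Int.natCast_nonneg t]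
    have h2 : (0:ℤ) ≤ (t:ℤ) + 1 := by positivity
    nlinarith [Int.natCast_nonneg K]
  -- sorted list
  set l := C.sort rL with hl
  have hlen : l.length = C.card := Finset.length_sort rL
  have hsorted : l.Pairwise rL := C.pairwise_sort rL
  have hnodup : l.Nodup := C.sort_nodup rL
  set k := l.length with hk
  have hk2 : 2 ≤ k := by omega
  set u : ℕ → ℤ × ℤ := fun i => l.getD i (0, 0) with hu
  have hu_mem : ∀ i, i < k → u i ∈ C := by
    intro i hi
    have : u i = l.get ⟨i, hi⟩ := List.getD_eq_get l (0,0) ⟨i, hi⟩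
    rw [this, ← Finset.mem_sort (α := ℤ × ℤ) rL]
    exact List.get_mem l _
  have hx_mono : ∀ i j, i < j → j < k → (u i).1 < (u j).1 := by
    intro i j hij hj
    have hi : i < k := lt_trans hij hj
    have hgi : u i = l.get ⟨i, hi⟩ := List.getD_eq_get l (0,0) ⟨i, hi⟩
    have hgj : u j = l.get ⟨j, hj⟩ := List.getD_eq_get l (0,0) ⟨j, hj⟩
    have hr : rL (u i) (u j) := by
      rw [hgi, hgj]
      exact List.pairwise_iff_get.1 hsorted ⟨i, hi⟩ ⟨j, hj⟩ hij
    have hne : u i ≠ u j := by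
      rw [hgi, hgj]
      intro h
      have := (List.Nodup.get_inj_iff hnodup).1 h
      simp only [Fin.mk.injEq] at this
      omega
    rcases hr with h | ⟨h1, _⟩
    · exact h
    · exact absurd (hxinj _ (hu_mem i hi) _ (hu_mem j hj) h1) hne
  set D : ℕ → ℤ × ℤ := fun i => u (i + 1) - u i with hD
  have hdx : ∀ i, i + 1 < k → 1 ≤ (D i).1 := by
    intro i hi
    have := hx_mono i (i+1) (Nat.lt_succ_self i) hi
    simp only [hD, Prod.fst_sub]
    omega
  have hdy_bound : ∀ i, i + 1 < k → |(D i).2| ≤ 2 * K := by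
    intro i hi
    have h1 := hy _ (hu_mem i (by omega))
    have h2 := hy _ (hu_mem (i+1) hi)
    simp only [hD, Prod.snd_sub]
    rw [abs_le] at *
    omega
  have hcross : ∀ i, i + 2 < k →
      (D (i+1)).2 * (D i).1 < (D i).2 * (D (i+1)).1 := by
    intro i hi
    have h := hconc _ (hu_mem i (by omega)) _ (hu_mem (i+1) (by omega)) _ (hu_mem (i+2) hi)
      (hx_mono i (i+1) (by omega) (by omega)) (hx_mono (i+1) (i+2) (by omega) (by omega))
    have hexp : X (u i) (u (i+1)) (u (i+2)) =
        (D i).2 * (D (i+1)).1 - (D (i+1)).2 * (D i).1 := by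
      simp only [X, hD, Prod.fst_sub, Prod.snd_sub]
      ring
    rw [hexp] at h
    omega
  -- slopes
  set s : ℕ → ℚ := fun i => if i + 1 < k then ((D i).2 : ℚ) / ((D i).1 : ℚ)
    else -(2 * (K:ℚ)) - 1 - i with hs
  have hs_real : ∀ i, i + 1 < k → s i = ((D i).2 : ℚ) / ((D i).1 : ℚ) := by
    intro i hi; simp only [hs, if_pos hi]
  have hs_lb : ∀ i, i + 1 < k → -(2 * (K:ℚ)) ≤ s i := by
    intro i hi
    rw [hs_real i hi]
    have h1 : (1:ℚ) ≤ ((D i).1 : ℚ) := by exact_mod_cast hdx i hi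
    have h2 : |((D i).2 : ℚ)| ≤ 2 * K := by exact_mod_cast hdy_bound i hi
    rw [abs_le] at h2
    rw [le_div_iff₀ (by linarith : (0:ℚ) < ((D i).1 : ℚ))]
    have hK : (0:ℚ) ≤ (K:ℚ) := by positivity
    nlinarith [h2.1, mul_nonneg (by linarith : (0:ℚ) ≤ 2*(K:ℚ)) (by linarith : (0:ℚ) ≤ ((D i).1:ℚ) - 1)]
  have hs_anti : StrictAnti s := by
    apply strictAnti_nat_of_succ_lt
    intro i
    by_cases h2k : i + 2 < k
    · rw [hs_real i (by omega), hs_real (i+1) h2k]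
      have hd1 : (0:ℚ) < ((D i).1 : ℚ) := by
        have := hdx i (by omega); exact_mod_cast lt_of_lt_of_le Int.zero_lt_one this
      have hd2 : (0:ℚ) < ((D (i+1)).1 : ℚ) := by
        have := hdx (i+1) (by omega); exact_mod_cast lt_of_lt_of_le Int.zero_lt_one this
      rw [div_lt_div_iff₀ hd2 hd1]
      exact_mod_cast hcross i h2k
    by_cases h1k : i + 1 < k
    · have hlb := hs_lb i h1k
      have : s (i+1) = -(2 * (K:ℚ)) - 1 - (i+1 : ℕ) := by
        simp only [hs, if_neg (by omega : ¬ (i + 1 + 1 < k))]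
      rw [this]
      push_cast
      linarith
    · have e1 : s i = -(2 * (K:ℚ)) - 1 - i := by simp only [hs, if_neg h1k]
      have e2 : s (i+1) = -(2 * (K:ℚ)) - 1 - (i+1 : ℕ) := by
        simp only [hs, if_neg (by omega : ¬ (i + 1 + 1 < k))]
      rw [e1, e2]
      push_cast
      linarith
  have hD_inj : ∀ i j, i + 1 < k → j + 1 < k → D i = D j → i = j := by
    intro i j hi hj hDij
    apply hs_anti.injective
    rw [hs_real i hi, hs_real j hj, hDij]
  -- telescoping sums
  have telx : ∀ m : ℕ, ∑ i ∈ Finset.range m, (D i).1 = (u m).1 - (u 0).1 := by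
    intro m
    have h := Finset.sum_range_sub (f := fun i => (u i).1) m
    rw [← h]
    apply Finset.sum_congr rfl
    intro i _
    simp only [hD, Prod.fst_sub]
  have tely : ∀ m : ℕ, ∑ i ∈ Finset.range m, (D i).2 = (u m).2 - (u 0).2 := by
    intro m
    have h := Finset.sum_range_sub (f := fun i => (u i).2) m
    rw [← h]
    apply Finset.sum_congr rfl
    intro i _
    simp only [hD, Prod.snd_sub]
  set P := (Finset.range (k-1)).filter (fun i => 0 < (D i).2) with hP
  have hPdown : ∀ i ∈ P, ∀ j < i, j ∈ P := by
    intro i hi j hji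
    simp only [hP, Finset.mem_filter, Finset.mem_range] at hi ⊢
    refine ⟨by omega, ?_⟩
    have hsi : 0 < s i := by
      rw [hs_real i (by omega)]
      apply div_pos
      · exact_mod_cast hi.2
      · have := hdx i (by omega); exact_mod_cast lt_of_lt_of_le Int.zero_lt_one this
    have hsj : 0 < s j := lt_trans hsi (hs_anti hji)
    rw [hs_real j (by omega)] at hsj
    rcases div_pos_iff.1 hsj with ⟨h1, _⟩ | ⟨_, h2⟩
    · exact_mod_cast h1
    · have := hdx j (by omega)
      have : (0:ℚ) < ((D j).1 : ℚ) := by exact_mod_cast lt_of_lt_of_le Int.zero_lt_one this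
      linarith
  have hPeq : P = Finset.range P.card := down P hPdown
  set j0 := P.card with hj0
  have hj0le : j0 ≤ k - 1 := by
    rw [hj0, hP]
    exact le_trans (Finset.card_filter_le _ _) (by rw [Finset.card_range])
  have hyb : ∀ m, m < k → -( K:ℤ) ≤ (u m).2 ∧ (u m).2 ≤ K := by
    intro m hm
    have := hy _ (hu_mem m hm)
    rw [abs_le] at this
    exact this
  have hsumabs : ∑ i ∈ Finset.range (k-1), |(D i).2| ≤ 4 * K := by
    have hsplit := Finset.sum_filter_add_sum_filter_not (Finset.range (k-1))
      (fun i => 0 < (D i).2) (fun i => |(D i).2|)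
    have hPsum : ∑ i ∈ P, |(D i).2| = (u j0).2 - (u 0).2 := by
      have h1 : ∑ i ∈ P, |(D i).2| = ∑ i ∈ P, (D i).2 := by
        apply Finset.sum_congr rfl
        intro i hi
        simp only [hP, Finset.mem_filter] at hi
        exact abs_of_pos hi.2
      rw [h1, hPeq]
      exact tely j0
    have hNsum : ∑ i ∈ (Finset.range (k-1)).filter (fun i => ¬ 0 < (D i).2), |(D i).2|
        = (u j0).2 - (u (k-1)).2 := by
      have h1 : ∑ i ∈ (Finset.range (k-1)).filter (fun i => ¬ 0 < (D i).2), |(D i).2|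
          = ∑ i ∈ (Finset.range (k-1)).filter (fun i => ¬ 0 < (D i).2), -(D i).2 := by
        apply Finset.sum_congr rfl
        intro i hi
        simp only [Finset.mem_filter, not_lt] at hi
        exact abs_of_nonpos hi.2
      rw [h1, Finset.sum_neg_distrib]
      have h2 : ∑ i ∈ (Finset.range (k-1)).filter (fun i => ¬ 0 < (D i).2), (D i).2
          = (∑ i ∈ Finset.range (k-1), (D i).2) - ∑ i ∈ P, (D i).2 := by
        have := Finset.sum_filter_add_sum_filter_not (Finset.range (k-1))
          (fun i => 0 < (D i).2) (fun i => (D i).2)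
        rw [← hP] at this
        omega
      rw [h2, tely (k-1)]
      have h3 : ∑ i ∈ P, (D i).2 = (u j0).2 - (u 0).2 := by
        rw [hPeq]
        exact tely j0
      rw [h3]
      ring
    rw [← hP] at hsplit
    rw [← hsplit, hPsum, hNsum]
    have b1 := hyb 0 (by omega)
    have b2 := hyb j0 (by omega)
    have b3 := hyb (k-1) (by omega)
    omega
  have hT : ∑ i ∈ Finset.range (k-1), ((D i).1 + |(D i).2|) ≤ 5 * K := by
    rw [Finset.sum_add_distrib, telx (k-1)]
    have b1 : 0 ≤ (u 0).1 := (hx _ (hu_mem 0 (by omega))).1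
    have b2 : (u (k-1)).1 ≤ K := (hx _ (hu_mem (k-1) (by omega))).2
    omega
  -- counting small difference vectors
  set Sm := (Finset.range (k-1)).filter (fun i => (D i).1 + |(D i).2| ≤ (t:ℤ)) with hSm
  have hSmcard : (Sm.card : ℤ) ≤ t * (2 * t + 1) := by
    have hinj : Set.InjOn D Sm := by
      intro i hi j hj hij
      simp only [hSm, Finset.mem_filter, Finset.mem_range, Finset.coe_filter, Set.mem_setOf_eq] at hi hj
      exact hD_inj i j (by omega) (by omega) hij
    have hmap : ∀ i ∈ Sm, D i ∈ (Finset.Icc (1:ℤ) t) ×ˢ (Finset.Icc (-(t:ℤ)) t) := by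
      intro i hi
      simp only [hSm, Finset.mem_filter, Finset.mem_range] at hi
      have h1 := hdx i (by omega)
      have h2 : (0:ℤ) ≤ |(D i).2| := abs_nonneg _
      rw [Finset.mem_product, Finset.mem_Icc, Finset.mem_Icc]
      have h3 : |(D i).2| ≤ (t:ℤ) := by omega
      exact ⟨⟨h1, by omega⟩, abs_le.1 h3⟩
    have hcard := Finset.card_le_card_of_injOn D hmap hinj
    have hboxcard : ((Finset.Icc (1:ℤ) t) ×ˢ (Finset.Icc (-(t:ℤ)) t)).card = t * (2*t+1) := by
      rw [Finset.card_product, Int.card_Icc, Int.card_Icc]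
      have e1 : ((t:ℤ) + 1 - 1).toNat = t := by omega
      have e2 : ((t:ℤ) + 1 - -(t:ℤ)).toNat = 2*t+1 := by omega
      rw [e1, e2]
    rw [hboxcard] at hcard
    exact_mod_cast hcard
  set Sc := (Finset.range (k-1)).filter (fun i => ¬ (D i).1 + |(D i).2| ≤ (t:ℤ)) with hSc
  have hcards : Sm.card + Sc.card = k - 1 := by
    rw [hSm, hSc]
    rw [Finset.card_filter_add_card_filter_not]
    exact Finset.card_range _
  have hScsum : ((t:ℤ)+1) * Sc.card ≤ ∑ i ∈ Finset.range (k-1), ((D i).1 + |(D i).2|) := by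
    have h1 : Sc.card • ((t:ℤ)+1) ≤ ∑ i ∈ Sc, ((D i).1 + |(D i).2|) := by
      apply Finset.card_nsmul_le_sum
      intro i hi
      simp only [hSc, Finset.mem_filter, not_le] at hi
      omega
    rw [nsmul_eq_mul] at h1
    have h2 : ∑ i ∈ Sc, ((D i).1 + |(D i).2|) ≤ ∑ i ∈ Finset.range (k-1), ((D i).1 + |(D i).2|) := by
      apply Finset.sum_le_sum_of_subset_of_nonneg (Finset.filter_subset _ _)
      intro i hi _
      have := hdx i (by simp only [Finset.mem_range] at hi; omega)
      have := abs_nonneg (D i).2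
      omega
    calc ((t:ℤ)+1) * Sc.card = (Sc.card : ℤ) * ((t:ℤ)+1) := by ring
      _ ≤ _ := h1
      _ ≤ _ := h2
  have hkC : (C.card : ℤ) = k := by exact_mod_cast hlen.symm
  have hcards' : (Sm.card : ℤ) + Sc.card = (k:ℤ) - 1 := by omega
  rw [hkC]
  have htp : (0:ℤ) ≤ (t:ℤ) + 1 := by positivity
  nlinarith [hScsum, hT, hSmcard, hcards', Int.natCast_nonneg Sc.card]


lemma ht_lt {q r p : ℤ × ℤ} (h1 : q.1 < p.1) (h2 : p.1 < r.1) (hX : 0 < X q p r) :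
    ht q r p.1 < (p.2 : ℝ) := by
  have hqr : q.1 < r.1 := lt_trans h1 h2
  have hc := X_cast (p := p) hqr
  have hd : (0:ℝ) < (r.1 : ℝ) - (q.1 : ℝ) := by
    have : (q.1:ℝ) < r.1 := by exact_mod_cast hqr
    linarith
  have hXr : (0:ℝ) < (X q p r : ℝ) := by exact_mod_cast hX
  nlinarith [hc, hd, hXr]

lemma lt_ht {q r p : ℤ × ℤ} (h1 : q.1 < p.1) (h2 : p.1 < r.1) (hX : X q p r < 0) :
    (p.2 : ℝ) < ht q r p.1 := by
  have hqr : q.1 < r.1 := lt_trans h1 h2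
  have hc := X_cast (p := p) hqr
  have hd : (0:ℝ) < (r.1 : ℝ) - (q.1 : ℝ) := by
    have : (q.1:ℝ) < r.1 := by exact_mod_cast hqr
    linarith
  have hXr : (X q p r : ℝ) < 0 := by exact_mod_cast hX
  nlinarith [hc, hd, hXr]

lemma core (K : ℕ) (V : Finset (ℤ × ℤ))
    (hbox : ∀ p ∈ V, 0 ≤ p.1 ∧ p.1 ≤ (K:ℤ) ∧ 0 ≤ p.2 ∧ p.2 ≤ (K:ℤ))
    (hext : ∀ p ∈ V, R p ∈ Set.extremePoints ℝ (convexHull ℝ (R '' (V : Set (ℤ × ℤ)))))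
    (t : ℕ) :
    ((V.card : ℤ) - 6 - 2 * (↑t * (2 * ↑t + 1))) * ((t:ℤ) + 1) ≤ 10 * K := by
  set S : Set (ℝ × ℝ) := R '' (V : Set (ℤ × ℤ)) with hS
  have hsub : ∀ p ∈ V, R p ∈ convexHull ℝ S := by
    intro p hp
    exact subset_convexHull ℝ S ⟨p, hp, rfl⟩
  have hchord : ∀ q ∈ V, ∀ r ∈ V, ∀ x : ℤ, q.1 ≤ x → x ≤ r.1 → q.1 < r.1 →
      ((x:ℝ), ht q r x) ∈ convexHull ℝ S := by
    intro q hq r hr x h1 h2 h3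
    exact (convex_convexHull ℝ S).segment_subset (hsub q hq) (hsub r hr) (ht_mem h1 h2 h3)
  -- no point on an open chord
  have notOn : ∀ p ∈ V, ∀ q ∈ V, ∀ r ∈ V, q.1 < p.1 → p.1 < r.1 → X q p r ≠ 0 := by
    intro p hp q hq r hr h1 h2 hX0
    have hqr : q.1 < r.1 := lt_trans h1 h2
    have hc := X_cast (p := p) hqr
    rw [hX0] at hc
    have hd : ((r.1 : ℝ) - (q.1 : ℝ)) ≠ 0 := by
      have : (q.1:ℝ) < r.1 := by exact_mod_cast hqr
      linarith
    have hpht : (p.2 : ℝ) = ht q r p.1 := by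
      push_cast at hc
      rcases mul_eq_zero.1 hc.symm with h | h
      · exact absurd h hd
      · linarith
    have hmem : R p ∈ segment ℝ (R q) (R r) := by
      have := ht_mem (q := q) (r := r) (x := p.1) h1.le h2.le hqr
      rwa [← hpht] at this
    refine extreme_con' (hext p hp) (hsub q hq) (hsub r hr) hmem ?_ ?_
    · intro h
      have : (q.1 : ℝ) = (p.1 : ℝ) := congrArg Prod.fst h
      have : q.1 = p.1 := by exact_mod_cast this
      omega
    · intro h
      have : (r.1 : ℝ) = (p.1 : ℝ) := congrArg Prod.fst h
      have : r.1 = p.1 := by exact_mod_cast this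
      omega
  -- same side of all straddling chords
  have sameSide : ∀ p ∈ V, ∀ q ∈ V, ∀ r ∈ V, ∀ q' ∈ V, ∀ r' ∈ V,
      q.1 < p.1 → p.1 < r.1 → q'.1 < p.1 → p.1 < r'.1 →
      0 < X q p r → 0 < X q' p r' := by
    intro p hp q hq r hr q' hq' r' hr' h1 h2 h3 h4 hpos
    rcases lt_trichotomy 0 (X q' p r') with h | h | h
    · exact h
    · exact absurd h.symm (notOn p hp q' hq' r' hr' h3 h4)
    · exfalso
      have hlow := ht_lt h1 h2 hpos
      have hhigh := lt_ht h3 h4 h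
      have hseg : R p ∈ openSegment ℝ ((p.1:ℝ), ht q r p.1) ((p.1:ℝ), ht q' r' p.1) :=
        vert_openSegment hlow hhigh
      refine extreme_con (hext p hp) (hchord q hq r hr p.1 h1.le h2.le (lt_trans h1 h2))
        (hchord q' hq' r' hr' p.1 h3.le h4.le (lt_trans h3 h4)) hseg ?_
      intro hcontra
      have : ht q r p.1 = (p.2:ℝ) := congrArg Prod.snd hcontra
      linarith
  -- middle of vertical triple impossible
  have colMid : ∀ p ∈ V, ∀ q ∈ V, ∀ r ∈ V, p.1 = q.1 → q.1 = r.1 →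
      p.2 < q.2 → q.2 < r.2 → False := by
    intro p hp q hq r hr e1 e2 l1 l2
    have hseg : R q ∈ openSegment ℝ (R p) (R r) := by
      have h := vert_openSegment (x := (q.1:ℝ)) (y := (q.2:ℝ)) (h := (p.2:ℝ)) (h' := (r.2:ℝ))
        (by exact_mod_cast l1) (by exact_mod_cast l2)
      have ep : R p = ((q.1:ℝ), (p.2:ℝ)) := by simp [R, e1]
      have er : R r = ((q.1:ℝ), (r.2:ℝ)) := by
        have : r.1 = q.1 := e2.symm
        simp [R, this]
      rw [ep, er]
      exact h
    refine extreme_con (hext q hq) (hsub p hp) (hsub r hr) hseg ?_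
    intro h
    have : (p.2:ℝ) = (q.2:ℝ) := congrArg Prod.snd h
    have : p.2 = q.2 := by exact_mod_cast this
    omega
  have mid3 : ∀ p ∈ V, ∀ q ∈ V, ∀ r ∈ V, p.1 = q.1 → q.1 = r.1 →
      p ≠ q → q ≠ r → p ≠ r → False := by
    intro p hp q hq r hr e1 e2 n1 n2 n3
    have y1 : p.2 ≠ q.2 := fun h => n1 (Prod.ext e1 h)
    have y2 : q.2 ≠ r.2 := fun h => n2 (Prod.ext e2 h)
    have y3 : p.2 ≠ r.2 := fun h => n3 (Prod.ext (e1.trans e2) h)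
    rcases lt_trichotomy p.2 q.2 with h1 | h1 | h1
    · rcases lt_trichotomy q.2 r.2 with h2 | h2 | h2
      · exact colMid p hp q hq r hr e1 e2 h1 h2
      · exact y2 h2
      · rcases lt_trichotomy p.2 r.2 with h3 | h3 | h3
        · exact colMid p hp r hr q hq (e1.trans e2) e2.symm h3 h2
        · exact y3 h3
        · exact colMid r hr p hp q hq (e1.trans e2).symm e1 h3 h1
    · exact y1 h1
    · rcases lt_trichotomy p.2 r.2 with h3 | h3 | h3
      · exact colMid q hq p hp r hr e1.symm (e1.trans e2) h1 h3
      · exact y3 h3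
      · rcases lt_trichotomy q.2 r.2 with h2 | h2 | h2
        · exact colMid q hq r hr p hp e2 (e1.trans e2).symm h2 h3
        · exact y2 h2
        · exact colMid r hr q hq p hp e2.symm e1.symm h2 h1
  rcases le_or_gt V.card 6 with h6 | h6
  · have h1 : ((V.card : ℤ) - 6 - 2 * (↑t * (2 * ↑t + 1))) ≤ 0 := by
      have : (V.card : ℤ) ≤ 6 := by exact_mod_cast h6
      nlinarith [Int.natCast_nonneg t]
    have h2 : (0:ℤ) ≤ (t:ℤ) + 1 := by positivity
    nlinarith [Int.natCast_nonneg K]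
  have hne : V.Nonempty := Finset.card_pos.1 (by omega)
  set xs := V.image Prod.fst with hxs
  have hxsne : xs.Nonempty := hne.image _
  obtain ⟨a, haV, hax⟩ := Finset.mem_image.1 (xs.min'_mem hxsne)
  obtain ⟨b, hbV, hbx⟩ := Finset.mem_image.1 (xs.max'_mem hxsne)
  have hxa : ∀ p ∈ V, a.1 ≤ p.1 := by
    intro p hp
    rw [hax]
    exact xs.min'_le p.1 (Finset.mem_image_of_mem _ hp)
  have hxb : ∀ p ∈ V, p.1 ≤ b.1 := by
    intro p hp
    rw [hbx]
    exact xs.le_max' p.1 (Finset.mem_image_of_mem _ hp)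
  have col2 : ∀ x : ℤ, (V.filter (fun p => p.1 = x)).card ≤ 2 := by
    intro x
    by_contra hgt
    push_neg at hgt
    obtain ⟨p, q, r, hp, hq, hr, npq, npr, nqr⟩ := Finset.two_lt_card_iff.1 hgt
    simp only [Finset.mem_filter] at hp hq hr
    exact mid3 p hp.1 q hq.1 r hr.1 (hp.2.trans hq.2.symm) (hq.2.trans hr.2.symm) npq nqr npr
  set W := V.filter (fun p => a.1 < p.1 ∧ p.1 < b.1) with hWdef
  set U := W.filter (fun p => 0 < X a p b) with hUdef
  set L := W.filter (fun p => X a p b < 0) with hLdef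
  have hWV : W ⊆ V := Finset.filter_subset _ _
  have hUW : U ⊆ W := Finset.filter_subset _ _
  have hLW : L ⊆ W := Finset.filter_subset _ _
  have hWcard : W.card ≤ U.card + L.card := by
    have hsubUL : W ⊆ U ∪ L := by
      intro p hp
      have hpV := hWV hp
      have hp' := hp
      simp only [hWdef, Finset.mem_filter] at hp'
      rcases lt_trichotomy 0 (X a p b) with h | h | h
      · exact Finset.mem_union_left _ (Finset.mem_filter.2 ⟨hp, h⟩)
      · exact absurd h.symm (notOn p hpV a haV b hbV hp'.2.1 hp'.2.2)
      · exact Finset.mem_union_right _ (Finset.mem_filter.2 ⟨hp, h⟩)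
    exact le_trans (Finset.card_le_card hsubUL) (Finset.card_union_le _ _)
  have hVW : V.card ≤ W.card + 4 := by
    have hsd : V \ W ⊆ (V.filter (fun p => p.1 = a.1)) ∪ (V.filter (fun p => p.1 = b.1)) := by
      intro p hp
      rw [Finset.mem_sdiff] at hp
      have h1 := hxa p hp.1
      have h2 := hxb p hp.1
      have h3 : ¬(a.1 < p.1 ∧ p.1 < b.1) := fun h => hp.2 (Finset.mem_filter.2 ⟨hp.1, h⟩)
      rw [Finset.mem_union, Finset.mem_filter, Finset.mem_filter]
      rcases eq_or_lt_of_le h1 with he | hl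
      · exact Or.inl ⟨hp.1, he.symm⟩
      · exact Or.inr ⟨hp.1, by omega⟩
    have c1 := Finset.card_le_card hsd
    have c2 := Finset.card_union_le (V.filter (fun p => p.1 = a.1)) (V.filter (fun p => p.1 = b.1))
    have c3 := col2 a.1
    have c4 := col2 b.1
    have c5 := Finset.card_sdiff_add_card_eq_card hWV
    omega
  have hUprop : ∀ p ∈ U, p ∈ V ∧ a.1 < p.1 ∧ p.1 < b.1 ∧ 0 < X a p b := by
    intro p hp
    have h1 := hUW hp
    have h2 := hWV h1
    simp only [hUdef, Finset.mem_filter] at hp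
    simp only [hWdef, Finset.mem_filter] at h1
    exact ⟨h2, h1.2.1, h1.2.2, hp.2⟩
  have hLprop : ∀ p ∈ L, p ∈ V ∧ a.1 < p.1 ∧ p.1 < b.1 ∧ X a p b < 0 := by
    intro p hp
    have h1 := hLW hp
    have h2 := hWV h1
    simp only [hLdef, Finset.mem_filter] at hp
    simp only [hWdef, Finset.mem_filter] at h1
    exact ⟨h2, h1.2.1, h1.2.2, hp.2⟩
  have hab : a.1 < b.1 := by
    rcases lt_or_ge a.1 b.1 with h | h
    · exact h
    · exfalso
      have hba := hxb a haV
      have hall : ∀ p ∈ V, p.1 = a.1 := by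
        intro p hp
        have h1 := hxa p hp
        have h2 := hxb p hp
        omega
      have hsub2 : V ⊆ V.filter (fun p => p.1 = a.1) :=
        fun p hp => Finset.mem_filter.2 ⟨hp, hall p hp⟩
      have hc := Finset.card_le_card hsub2
      have := col2 a.1
      omega
  have keyU : ∀ p ∈ U, ∀ q ∈ U, p.1 = q.1 → p.2 < q.2 → False := by
    intro p hp q hq he hlt
    obtain ⟨hpV, hpa, hpb, hpX⟩ := hUprop p hp
    obtain ⟨hqV, _, _, _⟩ := hUprop q hq
    have h1 : ht a b p.1 < (p.2:ℝ) := ht_lt hpa hpb hpX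
    have hseg : R p ∈ openSegment ℝ ((p.1:ℝ), ht a b p.1) (R q) := by
      have hv := vert_openSegment (x := (p.1:ℝ)) (h := ht a b p.1) (y := (p.2:ℝ))
        (h' := (q.2:ℝ)) h1 (by exact_mod_cast hlt)
      have hq2 : R q = ((p.1:ℝ), (q.2:ℝ)) := by simp [R, he]
      rw [hq2]
      exact hv
    refine extreme_con (hext p hpV) (hchord a haV b hbV p.1 hpa.le hpb.le hab) (hsub q hqV) hseg ?_
    intro h
    have h2 := congrArg Prod.snd h
    simp only [R] at h2
    linarith
  have keyL : ∀ p ∈ L, ∀ q ∈ L, p.1 = q.1 → p.2 < q.2 → False := by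
    intro p hp q hq he hlt
    obtain ⟨hpV, _, _, _⟩ := hLprop p hp
    obtain ⟨hqV, hqa, hqb, hqX⟩ := hLprop q hq
    have h1 : (q.2:ℝ) < ht a b q.1 := lt_ht hqa hqb hqX
    have hseg : R q ∈ openSegment ℝ (R p) ((q.1:ℝ), ht a b q.1) := by
      have hv := vert_openSegment (x := (q.1:ℝ)) (h := (p.2:ℝ)) (y := (q.2:ℝ))
        (h' := ht a b q.1) (by exact_mod_cast hlt) h1
      have hp2 : R p = ((q.1:ℝ), (p.2:ℝ)) := by simp [R, he]
      rw [hp2]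
      exact hv
    refine extreme_con (hext q hqV) (hsub p hpV) (hchord a haV b hbV q.1 hqa.le hqb.le hab) hseg ?_
    intro h
    have h2 := congrArg Prod.snd h
    simp only [R] at h2
    have : p.2 = q.2 := by exact_mod_cast h2
    omega
  have hxinjU : ∀ p ∈ U, ∀ q ∈ U, p.1 = q.1 → p = q := by
    intro p hp q hq he
    rcases lt_trichotomy p.2 q.2 with h | h | h
    · exact absurd (keyU p hp q hq he h) not_false
    · exact Prod.ext he h
    · exact absurd (keyU q hq p hp he.symm h) not_false
  have hconcU : ∀ p ∈ U, ∀ q ∈ U, ∀ r ∈ U, p.1 < q.1 → q.1 < r.1 → 0 < X p q r := by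
    intro p hp q hq r hr h1 h2
    obtain ⟨hpV, _, _, _⟩ := hUprop p hp
    obtain ⟨hqV, hqa, hqb, hqX⟩ := hUprop q hq
    obtain ⟨hrV, _, _, _⟩ := hUprop r hr
    exact sameSide q hqV a haV b hbV p hpV r hrV hqa hqb h1 h2 hqX
  have hxU : ∀ p ∈ U, 0 ≤ p.1 ∧ p.1 ≤ (K:ℤ) := by
    intro p hp
    have := hbox p (hWV (hUW hp))
    exact ⟨this.1, this.2.1⟩
  have hyU : ∀ p ∈ U, |p.2| ≤ (K:ℤ) := by
    intro p hp
    have := hbox p (hWV (hUW hp))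
    rw [abs_le]
    omega
  have hUbound := chainBound K U hxU hyU hxinjU hconcU t
  -- reflected lower chain
  set Ln := L.image (fun p : ℤ × ℤ => (p.1, -p.2)) with hLn
  have hmemLn : ∀ p' ∈ Ln, ∃ p ∈ L, p' = (p.1, -p.2) := by
    intro p' hp'
    obtain ⟨p, hp, hpe⟩ := Finset.mem_image.1 hp'
    exact ⟨p, hp, hpe.symm⟩
  have hLncard : Ln.card = L.card := by
    apply Finset.card_image_of_injOn
    intro p _ q _ h
    rw [Prod.ext_iff] at h ⊢
    simp only at h
    exact ⟨h.1, by omega⟩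
  have hxLn : ∀ p ∈ Ln, 0 ≤ p.1 ∧ p.1 ≤ (K:ℤ) := by
    intro p' hp'
    obtain ⟨p, hp, rfl⟩ := hmemLn p' hp'
    have := hbox p (hWV (hLW hp))
    exact ⟨this.1, this.2.1⟩
  have hyLn : ∀ p ∈ Ln, |p.2| ≤ (K:ℤ) := by
    intro p' hp'
    obtain ⟨p, hp, rfl⟩ := hmemLn p' hp'
    have := hbox p (hWV (hLW hp))
    simp only [abs_le]
    constructor <;> omega
  have hxinjLn : ∀ p ∈ Ln, ∀ q ∈ Ln, p.1 = q.1 → p = q := by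
    intro p' hp' q' hq' he
    obtain ⟨p, hp, rfl⟩ := hmemLn p' hp'
    obtain ⟨q, hq, rfl⟩ := hmemLn q' hq'
    simp only at he ⊢
    rcases lt_trichotomy p.2 q.2 with h | h | h
    · exact absurd (keyL p hp q hq he h) not_false
    · rw [he, h]
    · exact absurd (keyL q hq p hp he.symm h) not_false
  have hconcLn : ∀ p ∈ Ln, ∀ q ∈ Ln, ∀ r ∈ Ln, p.1 < q.1 → q.1 < r.1 → 0 < X p q r := by
    intro p' hp' q' hq' r' hr' h1 h2
    obtain ⟨p, hp, rfl⟩ := hmemLn p' hp'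
    obtain ⟨q, hq, rfl⟩ := hmemLn q' hq'
    obtain ⟨r, hr, rfl⟩ := hmemLn r' hr'
    simp only at h1 h2
    obtain ⟨hpV, _, _, _⟩ := hLprop p hp
    obtain ⟨hqV, hqa, hqb, hqX⟩ := hLprop q hq
    obtain ⟨hrV, _, _, _⟩ := hLprop r hr
    have hneg : X (p.1, -p.2) (q.1, -q.2) (r.1, -r.2) = -(X p q r) := by
      simp only [X]
      ring
    rw [hneg]
    rcases lt_trichotomy 0 (X p q r) with h | h | h
    · exfalso
      have := sameSide q hqV p hpV r hrV a haV b hbV h1 h2 hqa hqb h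
      omega
    · exact absurd h.symm (notOn q hqV p hpV r hrV h1 h2)
    · omega
  have hLbound := chainBound K Ln hxLn hyLn hxinjLn hconcLn t
  rw [hLncard] at hLbound
  have ht0 : (0:ℤ) ≤ (t:ℤ) + 1 := by positivity
  have c1 : (V.card : ℤ) ≤ (U.card : ℤ) + (L.card : ℤ) + 4 := by
    have : V.card ≤ U.card + L.card + 4 := by omega
    exact_mod_cast this
  nlinarith [hUbound, hLbound, c1, ht0]


end Vx

set_option maxHeartbeats 1000000 in
lemma vertexBound (n t : ℕ) :
    ((numVertices n : ℤ) - 6 - 2 * ((t:ℤ) * (2 * (t:ℤ) + 1))) * ((t:ℤ) + 1) ≤ 10 * n := by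
  have hVsub : modVertices n ⊆ modPoints n := extremePoints_convexHull_subset
  set Vset : Set (ℤ × ℤ) := Vx.R ⁻¹' (modVertices n) with hVset
  have himg : Vx.R '' Vset = modVertices n := by
    apply Set.Subset.antisymm
    · rintro p ⟨q, hq, rfl⟩
      exact hq
    · intro v hv
      obtain ⟨a, b, _, _, _, _, _, hve⟩ := hVsub hv
      refine ⟨(a, b), ?_, hve.symm⟩
      simp only [hVset, Set.mem_preimage, Vx.R]
      rwa [← hve]
  have hboxV : ∀ q ∈ Vset, 1 ≤ q.1 ∧ q.1 ≤ (n:ℤ) - 1 ∧ 1 ≤ q.2 ∧ q.2 ≤ (n:ℤ) - 1 := by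
    intro q hq
    obtain ⟨a, b, h1, h2, h3, h4, _, hve⟩ := hVsub hq
    have e1 : (q.1 : ℝ) = (a : ℝ) := congrArg Prod.fst hve
    have e2 : (q.2 : ℝ) = (b : ℝ) := congrArg Prod.snd hve
    have e1' : q.1 = a := by exact_mod_cast e1
    have e2' : q.2 = b := by exact_mod_cast e2
    omega
  have hfin : Vset.Finite := by
    apply Set.Finite.subset (Set.finite_Icc ((1:ℤ), (1:ℤ)) ((n:ℤ) - 1, (n:ℤ) - 1))
    intro q hq
    have := hboxV q hq
    rw [Set.mem_Icc, Prod.le_def, Prod.le_def]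
    exact ⟨⟨this.1, this.2.2.1⟩, ⟨this.2.1, this.2.2.2⟩⟩
  set F := hfin.toFinset with hF
  have hFcoe : (F : Set (ℤ × ℤ)) = Vset := hfin.coe_toFinset
  have hnum : numVertices n = F.card := by
    rw [numVertices, ← himg, Set.ncard_image_of_injective _ Vx.R_inj]
    exact Set.ncard_eq_toFinset_card _ hfin
  have hhullsub : convexHull ℝ (modVertices n) ⊆ modHull n :=
    convexHull_min extremePoints_subset (convex_convexHull ℝ (modPoints n))
  have hext : ∀ p ∈ F, Vx.R p ∈ Set.extremePoints ℝ (convexHull ℝ (Vx.R '' (F : Set (ℤ × ℤ)))) := by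
    intro p hp
    rw [hFcoe, himg]
    have hpv : Vx.R p ∈ modVertices n := by
      rw [← hFcoe] at hVset
      have : p ∈ Vset := hfin.mem_toFinset.1 hp
      exact this
    refine ⟨subset_convexHull ℝ _ hpv, ?_⟩
    intro x1 h1 x2 h2 hseg
    exact hpv.2 (hhullsub h1) (hhullsub h2) hseg
  have hbox : ∀ p ∈ F, 0 ≤ p.1 ∧ p.1 ≤ (n:ℤ) ∧ 0 ≤ p.2 ∧ p.2 ≤ (n:ℤ) := by
    intro p hp
    have := hboxV p (hfin.mem_toFinset.1 hp)
    omega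
  have := Vx.core n F hbox hext t
  rw [hnum]
  exact this

set_option maxHeartbeats 1000000 in
theorem stmt16 (ε : ℝ) (hε : 0 < ε) :
    ∃ N : ℕ, ∀ n : ℕ, N ≤ n → (numVertices n : ℝ) ≤ (n : ℝ) ^ ((3 : ℝ) / 4 + ε) := by
  have htend : Filter.Tendsto (fun n : ℕ => (n:ℝ) ^ ε) Filter.atTop Filter.atTop :=
    (tendsto_rpow_atTop hε).comp tendsto_natCast_atTop_atTop
  obtain ⟨N, hN⟩ := Filter.eventually_atTop.1
    ((htend.eventually_ge_atTop 22).and (Filter.eventually_ge_atTop 1))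
  refine ⟨N, fun n hn => ?_⟩
  obtain ⟨h22, h1n⟩ := hN n hn
  have hn1 : (1:ℝ) ≤ (n:ℝ) := by exact_mod_cast h1n
  have hn0 : (0:ℝ) < (n:ℝ) := by linarith
  set t := Nat.sqrt (Nat.sqrt n) with hts
  set s1 := Nat.sqrt n with hs1
  have hs1ge : 1 ≤ s1 := by
    rw [hs1]
    rw [Nat.le_sqrt]
    omega
  have ht1 : 1 ≤ t := by
    rw [hts, Nat.le_sqrt]
    omega
  have htsq : t * t ≤ s1 := by
    have := Nat.sqrt_le' s1
    rwa [pow_two] at this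
  have hssq : s1 * s1 ≤ n := by
    have := Nat.sqrt_le' n
    rwa [pow_two] at this
  have htup : s1 < (t+1) * (t+1) := by
    have := Nat.lt_succ_sqrt' s1
    rwa [Nat.succ_eq_add_one, pow_two] at this
  have hsup : n < (s1+1) * (s1+1) := by
    have := Nat.lt_succ_sqrt' n
    rwa [Nat.succ_eq_add_one, pow_two] at this
  -- real versions
  set X : ℝ := (t:ℝ) + 1 with hX
  have hX0 : (0:ℝ) < X := by positivity
  have hX4 : (n:ℝ) < X^4 := by
    have h1 : ((s1:ℝ) + 1) ≤ X^2 := by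
      have : s1 + 1 ≤ (t+1)*(t+1) := htup
      have := (Nat.cast_le (α := ℝ)).2 this
      push_cast at this ⊢
      nlinarith
    have h2 : (n:ℝ) < ((s1:ℝ)+1)^2 := by
      have := (Nat.cast_lt (α := ℝ)).2 hsup
      push_cast at this ⊢
      nlinarith
    calc (n:ℝ) < ((s1:ℝ)+1)^2 := h2
      _ ≤ (X^2)^2 := by nlinarith [hX0, (by positivity : (0:ℝ) ≤ (s1:ℝ)+1)]
      _ = X^4 := by ring
  have hq : (n:ℝ) ^ ((1:ℝ)/4) < X := by
    have h1 : (n:ℝ) ^ ((1:ℝ)/4) < (X^4) ^ ((1:ℝ)/4) :=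
      Real.rpow_lt_rpow (le_of_lt hn0) hX4 (by norm_num)
    have h2 : (X^4 : ℝ) ^ ((1:ℝ)/4) = X := by
      rw [← Real.rpow_natCast X 4, ← Real.rpow_mul hX0.le]
      norm_num
    rwa [h2] at h1
  have hm := vertexBound n t
  set m := numVertices n with hmn
  have hmR : ((m:ℝ) - 6 - 2 * ((t:ℝ) * (2*(t:ℝ)+1))) * X ≤ 10 * n := by
    have hcast : ((((m : ℤ) - 6 - 2 * ((t:ℤ) * (2 * (t:ℤ) + 1))) * ((t:ℤ) + 1) : ℤ) : ℝ)
        ≤ (((10 * n : ℕ) : ℤ) : ℝ) := Int.cast_le.2 (by exact_mod_cast hm)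
    push_cast at hcast
    rw [hX]
    linarith
  have hdiv : (m:ℝ) - 6 - 2 * ((t:ℝ) * (2*(t:ℝ)+1)) ≤ 10 * n / X := by
    rw [le_div_iff₀ hX0]
    exact hmR
  have h34 : (0:ℝ) < (n:ℝ) ^ ((3:ℝ)/4) := Real.rpow_pos_of_pos hn0 _
  have hone : (1:ℝ) ≤ (n:ℝ) ^ ((3:ℝ)/4) := Real.one_le_rpow hn1 (by norm_num)
  have hq0 : (0:ℝ) < (n:ℝ) ^ ((1:ℝ)/4) := Real.rpow_pos_of_pos hn0 _
  have hfrac : 10 * (n:ℝ) / X ≤ 10 * (n:ℝ) ^ ((3:ℝ)/4) := by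
    have h1 : 10 * (n:ℝ) / X ≤ 10 * (n:ℝ) / (n:ℝ) ^ ((1:ℝ)/4) := by
      apply div_le_div_of_nonneg_left (by positivity) hq0 hq.le
    have hmul : (n:ℝ)^((3:ℝ)/4) * (n:ℝ)^((1:ℝ)/4) = (n:ℝ) := by
      rw [← Real.rpow_add hn0]
      norm_num
    have h2 : 10 * (n:ℝ) / (n:ℝ) ^ ((1:ℝ)/4) = 10 * (n:ℝ) ^ ((3:ℝ)/4) := by
      rw [div_eq_iff hq0.ne', mul_assoc, hmul]
    linarith
  have htsqR : (t:ℝ) * (t:ℝ) ≤ (n:ℝ) ^ ((1:ℝ)/2) := by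
    have h1 : ((t*t:ℕ):ℝ) ≤ ((s1:ℕ):ℝ) := (Nat.cast_le (α := ℝ)).2 htsq
    have h2 : ((s1:ℝ))^2 ≤ (n:ℝ) := by
      have := (Nat.cast_le (α := ℝ)).2 hssq
      push_cast at this
      nlinarith
    have h3 : (s1:ℝ) ≤ (n:ℝ) ^ ((1:ℝ)/2) := by
      have h4 : ((s1:ℝ)^2) ^ ((1:ℝ)/2) ≤ (n:ℝ) ^ ((1:ℝ)/2) :=
        Real.rpow_le_rpow (by positivity) h2 (by norm_num)
      rwa [← Real.rpow_natCast (s1:ℝ) 2, ← Real.rpow_mul (by positivity), (by norm_num : ((2:ℕ):ℝ) * ((1:ℝ)/2) = 1), Real.rpow_one] at h4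
    push_cast at h1
    linarith
  have hhalf : (n:ℝ) ^ ((1:ℝ)/2) ≤ (n:ℝ) ^ ((3:ℝ)/4) :=
    Real.rpow_le_rpow_of_exponent_le hn1 (by norm_num)
  have ht1R : (1:ℝ) ≤ (t:ℝ) := by exact_mod_cast ht1
  have hmain : (m:ℝ) ≤ 22 * (n:ℝ) ^ ((3:ℝ)/4) := by
    have e1 : 2 * ((t:ℝ) * (2*(t:ℝ)+1)) ≤ 6 * ((t:ℝ)*(t:ℝ)) := by nlinarith
    have e2 : (t:ℝ)*(t:ℝ) ≤ (n:ℝ) ^ ((3:ℝ)/4) := le_trans htsqR hhalf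
    nlinarith [hdiv, hfrac]
  calc (m:ℝ) ≤ 22 * (n:ℝ) ^ ((3:ℝ)/4) := hmain
    _ ≤ (n:ℝ) ^ ((3:ℝ)/4) * (n:ℝ) ^ ε := by nlinarith [h34]
    _ = (n:ℝ) ^ ((3:ℝ)/4 + ε) := (Real.rpow_add hn0 _ _).symm
end
end

section
/- Let n ≥ 3 be an integer and let (a, b) be a vertex of C_n. Then there exists an integer j with 1 ≤ j ≤ max(1, ⌊(T(n−1)+3)/4⌋) such that a(n − b) = jn − 1 or b(n − a) = jn − 1; that is, every vertex of C_n lies on one of the curves x(n−y) = jn−1 or y(n−x) = jn−1 with j ≤ max(1, ⌊(T(n−1)+3)/4⌋). -/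
open Filter MeasureTheory

noncomputable section

/-- `T(s)`, the maximal ratio `d_{i+1}/d_i` of consecutive divisors of `s`. -/
def Tratio (s : ℕ) : ℝ :=
  sSup {r : ℝ | ∃ d e : ℕ, d ∣ s ∧ e ∣ s ∧ d < e ∧
    (∀ f : ℕ, f ∣ s → ¬(d < f ∧ f < e)) ∧ r = (e : ℝ) / (d : ℝ)}

set_option maxHeartbeats 1000000

namespace Stmt17A

lemma bracket (s : ℕ) (hs : 2 ≤ s) (k : ℤ) (hk1 : 1 ≤ k) (hks : k ≤ (s:ℤ)) :
    ∃ d e : ℕ, d ∣ s ∧ e ∣ s ∧ d < e ∧ (∀ f : ℕ, f ∣ s → ¬(d < f ∧ f < e)) ∧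
      (d : ℤ) * k ≤ (s:ℤ) ∧ (s : ℤ) ≤ (e:ℤ) * k := by
  classical
  have hs0 : s ≠ 0 := by omega
  set D := s.divisors.filter (fun d => d < s ∧ (d:ℤ)*k ≤ (s:ℤ)) with hD
  have h1D : (1:ℕ) ∈ D := by
    simp only [hD, Finset.mem_filter, Nat.mem_divisors]
    refine ⟨⟨one_dvd s, hs0⟩, by omega, by push_cast; omega⟩
  have hDne : D.Nonempty := ⟨1, h1D⟩
  set d := D.max' hDne with hd
  have hdD : d ∈ D := D.max'_mem hDne
  have hdprop : (d ∣ s ∧ s ≠ 0) ∧ d < s ∧ (d:ℤ)*k ≤ (s:ℤ) := by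
    simpa only [hD, Finset.mem_filter, Nat.mem_divisors] using hdD
  obtain ⟨⟨hdvd, -⟩, hdlt, hdk⟩ := hdprop
  set E := s.divisors.filter (fun f => d < f) with hE
  have hsE : s ∈ E := by
    simp only [hE, Finset.mem_filter, Nat.mem_divisors]
    exact ⟨⟨dvd_rfl, hs0⟩, hdlt⟩
  have hEne : E.Nonempty := ⟨s, hsE⟩
  set e := E.min' hEne with he
  have heE : e ∈ E := E.min'_mem hEne
  have heprop : (e ∣ s ∧ s ≠ 0) ∧ d < e := by
    simpa only [hE, Finset.mem_filter, Nat.mem_divisors] using heE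
  obtain ⟨⟨hedvd, -⟩, hde⟩ := heprop
  refine ⟨d, e, hdvd, hedvd, hde, ?_, hdk, ?_⟩
  · intro f hf hdf
    have hfE : f ∈ E := by
      simp only [hE, Finset.mem_filter, Nat.mem_divisors]
      exact ⟨⟨hf, hs0⟩, hdf.1⟩
    have := E.min'_le f hfE
    omega
  · by_cases hes : e = s
    · rw [hes]
      nlinarith [Int.natCast_nonneg s]
    · have hflt : e < s := lt_of_le_of_ne (Nat.le_of_dvd (by omega) hedvd) hes
      by_contra hcon
      push_neg at hcon
      have heD : e ∈ D := by
        simp only [hD, Finset.mem_filter, Nat.mem_divisors]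
        exact ⟨⟨hedvd, hs0⟩, hflt, by omega⟩
      have := D.le_max' e heD
      omega

lemma ratio_le_T (s : ℕ) (hs : 1 ≤ s) (d e : ℕ) (hd : d ∣ s) (he : e ∣ s) (hde : d < e)
    (hcons : ∀ f : ℕ, f ∣ s → ¬(d < f ∧ f < e)) : (e:ℝ)/(d:ℝ) ≤ Tratio s := by
  apply le_csSup
  · refine ⟨(s:ℝ), ?_⟩
    rintro r ⟨d', e', hd', he', hde', -, rfl⟩
    have hd'1 : 1 ≤ d' := Nat.one_le_iff_ne_zero.2 (by rintro rfl; exact absurd (Nat.eq_zero_of_zero_dvd hd') (by omega))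
    have he's : e' ≤ s := Nat.le_of_dvd (by omega) he'
    calc (e':ℝ)/(d':ℝ) ≤ (e':ℝ) := div_le_self (by positivity) (by exact_mod_cast hd'1)
      _ ≤ (s:ℝ) := by exact_mod_cast he's
  · exact ⟨d, e, hd, he, hde, hcons, rfl⟩

lemma am_gm_chord {A B C : ℝ} (hA : 0 < A) (hB : 0 < B) (hC : 0 ≤ C) (h : C^2 < 4*(A*B)) :
    C < A + B := by nlinarith [sq_nonneg (A - B)]

lemma quadrant_case (n : ℕ) (hn : 3 ≤ n) (a b j : ℤ) (α γ : ℝ)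
    (ha1 : 1 ≤ a) (hb1 : 1 ≤ b) (hbn : b ≤ (n:ℤ) - 1)
    (hj : a * ((n:ℤ) - b) = j * (n:ℤ) - 1)
    (hjT : (Tratio (n-1) + 3) / 4 < (j:ℝ))
    (hα : 0 < α) (hγ : 0 < γ) :
    ∃ d q : ℕ, 0 < d ∧ 0 < q ∧ d * q = n - 1 ∧
      (d:ℝ)*α - ((n:ℝ) - (q:ℝ))*γ ≤ (a:ℝ)*α - (b:ℝ)*γ := by
  have hs2 : 2 ≤ n - 1 := by omega
  have hsZ : ((n - 1 : ℕ) : ℤ) = (n:ℤ) - 1 := by omega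
  have hsR : ((n - 1 : ℕ) : ℝ) = (n:ℝ) - 1 := by
    push_cast [Nat.cast_sub (show 1 ≤ n by omega)]; ring
  obtain ⟨d, e, hd, he, hde, hcons, hdk, hek⟩ :=
    bracket (n-1) hs2 ((n:ℤ) - b) (by omega) (by omega)
  have hd0 : 0 < d := Nat.pos_of_ne_zero (by rintro rfl; exact absurd (Nat.eq_zero_of_zero_dvd hd) (by omega))
  have he0 : 0 < e := by omega
  have hT := ratio_le_T (n-1) (by omega) d e hd he hde hcons
  set T := Tratio (n-1) with hTdef
  -- real facts
  have hnR : (3:ℝ) ≤ (n:ℝ) := by exact_mod_cast hn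
  have hn1 : (0:ℝ) < (n:ℝ) - 1 := by linarith
  have haR : (1:ℝ) ≤ (a:ℝ) := by exact_mod_cast ha1
  have hb1R : (1:ℝ) ≤ (b:ℝ) := by exact_mod_cast hb1
  have hbnR : (b:ℝ) ≤ (n:ℝ) - 1 := by
    have : ((b:ℤ):ℝ) ≤ (((n:ℤ) - 1 : ℤ):ℝ) := by exact_mod_cast hbn
    push_cast at this; linarith
  have hdR : (1:ℝ) ≤ (d:ℝ) := by exact_mod_cast hd0
  have hdeR : (d:ℝ) < (e:ℝ) := by exact_mod_cast hde
  have hd0R : (0:ℝ) < (d:ℝ) := by linarith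
  have he0R : (0:ℝ) < (e:ℝ) := by linarith
  have hTd : (e:ℝ) ≤ T * (d:ℝ) := by
    rw [div_le_iff₀ hd0R] at hT; linarith
  have h4j : T + 3 < 4 * (j:ℝ) := by linarith
  have hj1R : (1:ℝ) ≤ (j:ℝ) := by
    have hT1 : (1:ℝ) < T := by
      have : (1:ℝ) < (e:ℝ)/(d:ℝ) := (one_lt_div hd0R).2 hdeR
      linarith
    linarith
  have hjR : (a:ℝ) * ((n:ℝ) - (b:ℝ)) = (j:ℝ)*(n:ℝ) - 1 := by exact_mod_cast hj
  -- chord inequality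
  have hABval : (((n:ℝ)-1)*(a:ℝ)) * (((d:ℝ)*(e:ℝ))*((n:ℝ)-(b:ℝ)))
      = ((n:ℝ)-1)*((d:ℝ)*(e:ℝ))*((j:ℝ)*(n:ℝ) - 1) := by
    linear_combination ((n:ℝ)-1)*(d:ℝ)*(e:ℝ) * hjR
  have step1 : ((d:ℝ)+(e:ℝ))^2 ≤ (d:ℝ)*(e:ℝ)*(T+3) := by
    nlinarith [mul_le_mul_of_nonneg_right hTd (le_of_lt he0R),
      mul_le_mul_of_nonneg_left (le_of_lt hdeR) (le_of_lt hd0R)]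
  have hlt : (((n:ℝ)-1)*((d:ℝ)+(e:ℝ)))^2
      < 4*((((n:ℝ)-1)*(a:ℝ)) * (((d:ℝ)*(e:ℝ))*((n:ℝ)-(b:ℝ)))) := by
    have hD0 : (0:ℝ) < (d:ℝ)*(e:ℝ) := mul_pos hd0R he0R
    have c1 : (((n:ℝ)-1)*((d:ℝ)+(e:ℝ)))^2 = ((n:ℝ)-1)^2 * (((d:ℝ)+(e:ℝ))^2) := by ring
    have c2 : ((n:ℝ)-1)^2 * (((d:ℝ)+(e:ℝ))^2) ≤ ((n:ℝ)-1)^2 * ((d:ℝ)*(e:ℝ)*(T+3)) :=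
      mul_le_mul_of_nonneg_left step1 (by positivity)
    have c3 : ((n:ℝ)-1)^2 * ((d:ℝ)*(e:ℝ)*(T+3)) < ((n:ℝ)-1)^2 * ((d:ℝ)*(e:ℝ)*(4*(j:ℝ))) := by
      apply mul_lt_mul_of_pos_left _ (by positivity)
      exact mul_lt_mul_of_pos_left h4j hD0
    have c4 : ((n:ℝ)-1)^2 * ((d:ℝ)*(e:ℝ)*(4*(j:ℝ)))
        ≤ 4*(((n:ℝ)-1)*((d:ℝ)*(e:ℝ))*((j:ℝ)*(n:ℝ) - 1)) := by
      have hjn : (j:ℝ)*((n:ℝ)-1) ≤ (j:ℝ)*(n:ℝ) - 1 := by nlinarith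
      have hK : (0:ℝ) ≤ 4*(((n:ℝ)-1)*((d:ℝ)*(e:ℝ))) := by positivity
      calc ((n:ℝ)-1)^2 * ((d:ℝ)*(e:ℝ)*(4*(j:ℝ)))
          = 4*(((n:ℝ)-1)*((d:ℝ)*(e:ℝ))) * ((j:ℝ)*((n:ℝ)-1)) := by ring
        _ ≤ 4*(((n:ℝ)-1)*((d:ℝ)*(e:ℝ))) * ((j:ℝ)*(n:ℝ)-1) := mul_le_mul_of_nonneg_left hjn hK
        _ = 4*(((n:ℝ)-1)*((d:ℝ)*(e:ℝ))*((j:ℝ)*(n:ℝ) - 1)) := by ring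
    calc (((n:ℝ)-1)*((d:ℝ)+(e:ℝ)))^2 = ((n:ℝ)-1)^2 * (((d:ℝ)+(e:ℝ))^2) := c1
      _ ≤ ((n:ℝ)-1)^2 * ((d:ℝ)*(e:ℝ)*(T+3)) := c2
      _ < ((n:ℝ)-1)^2 * ((d:ℝ)*(e:ℝ)*(4*(j:ℝ))) := c3
      _ ≤ 4*(((n:ℝ)-1)*((d:ℝ)*(e:ℝ))*((j:ℝ)*(n:ℝ) - 1)) := c4
      _ = 4*((((n:ℝ)-1)*(a:ℝ)) * (((d:ℝ)*(e:ℝ))*((n:ℝ)-(b:ℝ)))) := by rw [hABval]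
  have chord : ((n:ℝ)-1)*((d:ℝ)+(e:ℝ))
      < ((n:ℝ)-1)*(a:ℝ) + ((d:ℝ)*(e:ℝ))*((n:ℝ)-(b:ℝ)) :=
    am_gm_chord (mul_pos hn1 (by linarith))
      (mul_pos (mul_pos hd0R he0R) (by linarith : (0:ℝ) < (n:ℝ)-(b:ℝ))) (by positivity) hlt
  by_cases hcase : α * ((d:ℝ)*(e:ℝ)) ≤ γ * ((n:ℝ)-1)
  · -- use vertex e
    have hq := Nat.mul_div_cancel' he
    set q := (n-1) / e with hqdef
    have hq0 : 0 < q := by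
      rcases Nat.eq_zero_or_pos q with h | h
      · rw [h, mul_zero] at hq; omega
      · exact h
    have hqeR : (e:ℝ)*(q:ℝ) = (n:ℝ) - 1 := by
      rw [← hsR]; exact_mod_cast congrArg (Nat.cast : ℕ → ℝ) hq
    have hekR : (n:ℝ) - 1 ≤ (e:ℝ)*((n:ℝ)-(b:ℝ)) := by
      rw [hsZ] at hek
      have : (((n:ℤ) - 1 : ℤ):ℝ) ≤ (((e:ℤ) * ((n:ℤ) - b) : ℤ):ℝ) := by exact_mod_cast hek
      push_cast at this; linarith
    have hqb : (b:ℝ) ≤ (n:ℝ) - (q:ℝ) := by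
      have h1 : (e:ℝ)*(q:ℝ) ≤ (e:ℝ)*((n:ℝ)-(b:ℝ)) := by linarith
      have h2 : (q:ℝ) ≤ (n:ℝ)-(b:ℝ) := le_of_mul_le_mul_left h1 he0R
      linarith
    have hDq : (d:ℝ)*(e:ℝ)*(q:ℝ) = (d:ℝ)*((n:ℝ)-1) := by
      linear_combination (d:ℝ) * hqeR
    have H : 0 < ((n:ℝ)-1)*((a:ℝ)-(e:ℝ)) + (d:ℝ)*(e:ℝ)*(((n:ℝ)-(q:ℝ))-(b:ℝ)) := by
      linarith [chord, hDq]
    have h1 : 0 < α * (((n:ℝ)-1)*((a:ℝ)-(e:ℝ)) + (d:ℝ)*(e:ℝ)*(((n:ℝ)-(q:ℝ))-(b:ℝ))) :=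
      mul_pos hα H
    have h2 : 0 ≤ (γ*((n:ℝ)-1) - α*((d:ℝ)*(e:ℝ))) * (((n:ℝ)-(q:ℝ)) - (b:ℝ)) :=
      mul_nonneg (by linarith) (by linarith)
    have hfin : 0 < ((n:ℝ)-1)*(α*((a:ℝ)-(e:ℝ)) + γ*(((n:ℝ)-(q:ℝ))-(b:ℝ))) := by
      linarith [h1, h2]
    have hx : 0 < α*((a:ℝ)-(e:ℝ)) + γ*(((n:ℝ)-(q:ℝ))-(b:ℝ)) := by
      rcases mul_pos_iff.mp hfin with ⟨-, h⟩ | ⟨h, -⟩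
      · exact h
      · linarith
    exact ⟨e, q, he0, hq0, hq, by linarith⟩
  · -- use vertex d
    push_neg at hcase
    have hq := Nat.mul_div_cancel' hd
    set q := (n-1) / d with hqdef
    have hq0 : 0 < q := by
      rcases Nat.eq_zero_or_pos q with h | h
      · rw [h, mul_zero] at hq; omega
      · exact h
    have hqdRR : (d:ℝ)*(q:ℝ) = (n:ℝ) - 1 := by
      rw [← hsR]; exact_mod_cast congrArg (Nat.cast : ℕ → ℝ) hq
    have hdkR : (d:ℝ)*((n:ℝ)-(b:ℝ)) ≤ (n:ℝ) - 1 := by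
      rw [hsZ] at hdk
      have : (((d:ℤ) * ((n:ℤ) - b) : ℤ):ℝ) ≤ (((n:ℤ) - 1 : ℤ):ℝ) := by exact_mod_cast hdk
      push_cast at this; linarith
    have hqb : (n:ℝ) - (q:ℝ) ≤ (b:ℝ) := by
      have h1 : (d:ℝ)*((n:ℝ)-(b:ℝ)) ≤ (d:ℝ)*(q:ℝ) := by linarith
      have h2 : (n:ℝ)-(b:ℝ) ≤ (q:ℝ) := le_of_mul_le_mul_left h1 hd0R
      linarith
    have hDq : (d:ℝ)*(e:ℝ)*(q:ℝ) = (e:ℝ)*((n:ℝ)-1) := by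
      linear_combination (e:ℝ) * hqdRR
    have H : 0 < ((n:ℝ)-1)*((a:ℝ)-(d:ℝ)) + (d:ℝ)*(e:ℝ)*(((n:ℝ)-(q:ℝ))-(b:ℝ)) := by
      linarith [chord, hDq]
    have h1 : 0 < α * (((n:ℝ)-1)*((a:ℝ)-(d:ℝ)) + (d:ℝ)*(e:ℝ)*(((n:ℝ)-(q:ℝ))-(b:ℝ))) :=
      mul_pos hα H
    have h2 : 0 ≤ (α*((d:ℝ)*(e:ℝ)) - γ*((n:ℝ)-1)) * ((b:ℝ) - ((n:ℝ)-(q:ℝ))) :=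
      mul_nonneg (by linarith) (by linarith)
    have hfin : 0 < ((n:ℝ)-1)*(α*((a:ℝ)-(d:ℝ)) + γ*(((n:ℝ)-(q:ℝ))-(b:ℝ))) := by
      linarith [h1, h2]
    have hx : 0 < α*((a:ℝ)-(d:ℝ)) + γ*(((n:ℝ)-(q:ℝ))-(b:ℝ)) := by
      rcases mul_pos_iff.mp hfin with ⟨-, h⟩ | ⟨h, -⟩
      · exact h
      · linarith
    exact ⟨d, q, hd0, hq0, hq, by linarith⟩

/-- the two divisor chains with `j = 1`. -/
def chainSet (n : ℕ) : Set (ℝ × ℝ) :=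
  {p | ∃ d q : ℕ, 0 < d ∧ 0 < q ∧ d * q = n - 1 ∧
      (p = ((d:ℝ), (n:ℝ) - (q:ℝ)) ∨ p = ((n:ℝ) - (q:ℝ), (d:ℝ)))}

lemma chainSet_finite (n : ℕ) : (chainSet n).Finite := by
  have hsub : chainSet n ⊆
      (fun p : ℕ × ℕ => ((p.1:ℝ), (n:ℝ) - (p.2:ℝ))) '' (Set.Iic n ×ˢ Set.Iic n) ∪
      (fun p : ℕ × ℕ => ((n:ℝ) - (p.2:ℝ), (p.1:ℝ))) '' (Set.Iic n ×ˢ Set.Iic n) := by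
    rintro p ⟨d, q, hd, hq, hdq, hp | hp⟩ <;>
    [left; right] <;>
    · have h1 : d ≤ d * q := Nat.le_mul_of_pos_right d hq
      have h2 : q ≤ d * q := Nat.le_mul_of_pos_left q hd
      rw [hdq] at h1 h2
      refine ⟨(d, q), ⟨?_, ?_⟩, hp.symm⟩ <;> simp only [Set.mem_Iic] <;> omega
  exact Set.Finite.subset ((((Set.finite_Iic n).prod (Set.finite_Iic n)).image _).union
    (((Set.finite_Iic n).prod (Set.finite_Iic n)).image _)) hsub

lemma chainSet_subset (n : ℕ) (hn : 3 ≤ n) : chainSet n ⊆ modPoints n := by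
  rintro p ⟨d, q, hd, hq, hdq, hp⟩
  have hZ : (d:ℤ) * (q:ℤ) = (n:ℤ) - 1 := by
    have := congrArg (Nat.cast : ℕ → ℤ) hdq
    push_cast [Nat.cast_sub (show 1 ≤ n by omega)] at this
    exact this
  have hd1 : (1:ℤ) ≤ (d:ℤ) := by exact_mod_cast hd
  have hq1 : (1:ℤ) ≤ (q:ℤ) := by exact_mod_cast hq
  have hdn : (d:ℤ) ≤ (n:ℤ) - 1 := by nlinarith
  have hqn : (q:ℤ) ≤ (n:ℤ) - 1 := by nlinarith
  rcases hp with hp | hp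
  · refine ⟨(d:ℤ), (n:ℤ) - (q:ℤ), hd1, hdn, by omega, by omega,
      ⟨(d:ℤ) - 1, by linear_combination -hZ⟩, ?_⟩
    rw [hp]; push_cast; rfl
  · refine ⟨(n:ℤ) - (q:ℤ), (d:ℤ), by omega, by omega, hd1, hdn,
      ⟨(d:ℤ) - 1, by linear_combination -hZ⟩, ?_⟩
    rw [hp]; push_cast; rfl


end Stmt17A

open Stmt17A in
theorem stmt17 (n : ℕ) (hn : 3 ≤ n) (a b : ℤ)
    (hv : ((a : ℝ), (b : ℝ)) ∈ modVertices n) :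
    ∃ j : ℤ, 1 ≤ j ∧ j ≤ max 1 ⌊(Tratio (n - 1) + 3) / 4⌋ ∧
      (a * ((n : ℤ) - b) = j * (n : ℤ) - 1 ∨ b * ((n : ℤ) - a) = j * (n : ℤ) - 1) := by
  have hv' : ((a:ℝ), (b:ℝ)) ∈ Set.extremePoints ℝ (convexHull ℝ (modPoints n)) := hv
  have hP : ((a:ℝ), (b:ℝ)) ∈ modPoints n := extremePoints_convexHull_subset hv'
  obtain ⟨a', b', ha1, han, hb1, hbn, hdvd, hpe⟩ := hP
  rw [Prod.mk.injEq] at hpe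
  obtain ⟨h1, h2⟩ := hpe
  have haa : a = a' := by exact_mod_cast h1
  have hbb : b = b' := by exact_mod_cast h2
  subst haa; subst hbb
  obtain ⟨c, hc⟩ := hdvd
  have hnZ : (3:ℤ) ≤ (n:ℤ) := by exact_mod_cast hn
  set j1 := a - c with hj1def
  set j2 := b - c with hj2def
  have hj1 : a * ((n:ℤ) - b) = j1 * n - 1 := by rw [hj1def]; linear_combination -hc
  have hj2 : b * ((n:ℤ) - a) = j2 * n - 1 := by rw [hj2def]; linear_combination -hc
  have hj1pos : 1 ≤ j1 := by
    nlinarith [mul_pos (show (0:ℤ) < a by omega) (show (0:ℤ) < (n:ℤ) - b by omega)]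
  have hj2pos : 1 ≤ j2 := by
    nlinarith [mul_pos (show (0:ℤ) < b by omega) (show (0:ℤ) < (n:ℤ) - a by omega)]
  by_cases hc1 : j1 ≤ max 1 ⌊(Tratio (n - 1) + 3) / 4⌋
  · exact ⟨j1, hj1pos, hc1, Or.inl hj1⟩
  by_cases hc2 : j2 ≤ max 1 ⌊(Tratio (n - 1) + 3) / 4⌋
  · exact ⟨j2, hj2pos, hc2, Or.inr hj2⟩
  exfalso
  push_neg at hc1 hc2
  have hfloor : ∀ jj : ℤ, max 1 ⌊(Tratio (n - 1) + 3) / 4⌋ < jj →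
      (Tratio (n-1) + 3) / 4 < (jj:ℝ) := by
    intro jj hjj
    have h1 : ⌊(Tratio (n - 1) + 3) / 4⌋ + 1 ≤ jj := by
      have := le_max_right 1 ⌊(Tratio (n - 1) + 3) / 4⌋; omega
    calc (Tratio (n-1) + 3) / 4 < (⌊(Tratio (n - 1) + 3) / 4⌋ : ℝ) + 1 :=
          Int.lt_floor_add_one _
      _ ≤ (jj:ℝ) := by exact_mod_cast h1
  have hjT1 := hfloor j1 hc1
  have hjT2 := hfloor j2 hc2
  have hclosed : IsClosed (convexHull ℝ (chainSet n)) :=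
    ((chainSet_finite n).isCompact_convexHull (𝕜 := ℝ)).isClosed
  have hcastn : ((n-1:ℕ):ℝ) = (n:ℝ) - 1 := by
    push_cast [Nat.cast_sub (show 1 ≤ n by omega)]; ring
  have key : ((a:ℝ), (b:ℝ)) ∈ convexHull ℝ (chainSet n) := by
    by_contra hnc
    obtain ⟨f, u, hfu, hQ⟩ :=
      geometric_hahn_banach_point_closed (convex_convexHull ℝ _) hclosed hnc
    set α := f (1, 0) with hαdef
    set β := f (0, 1) with hβdef
    have hf : ∀ x y : ℝ, f (x, y) = x * α + y * β := by
      intro x y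
      have hxy : ((x, y) : ℝ × ℝ) = x • ((1:ℝ), (0:ℝ)) + y • ((0:ℝ), (1:ℝ)) := by
        simp [Prod.ext_iff]
      rw [hxy, map_add, _root_.map_smul, _root_.map_smul, smul_eq_mul, smul_eq_mul, hαdef, hβdef]
    have hcontr : ∀ Q ∈ chainSet n, ¬ (f Q ≤ f ((a:ℝ), (b:ℝ))) := by
      intro Q hQm hle
      have h1 := hQ Q (subset_convexHull ℝ _ hQm)
      linarith
    have haR1 : (1:ℝ) ≤ (a:ℝ) := by exact_mod_cast ha1
    have hbR1 : (1:ℝ) ≤ (b:ℝ) := by exact_mod_cast hb1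
    have haRn : (a:ℝ) ≤ (n:ℝ) - 1 := by
      have : ((a:ℤ):ℝ) ≤ (((n:ℤ) - 1 : ℤ):ℝ) := by exact_mod_cast han
      push_cast at this; linarith
    have hbRn : (b:ℝ) ≤ (n:ℝ) - 1 := by
      have : ((b:ℤ):ℝ) ≤ (((n:ℤ) - 1 : ℤ):ℝ) := by exact_mod_cast hbn
      push_cast at this; linarith
    have hm11 : ((1:ℝ), (1:ℝ)) ∈ chainSet n := by
      refine ⟨1, n - 1, one_pos, by omega, by omega, Or.inl ?_⟩
      rw [hcastn, Prod.mk.injEq]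
      constructor <;> norm_num
    have hmnn : (((n:ℝ) - 1), ((n:ℝ) - 1)) ∈ chainSet n := by
      refine ⟨n - 1, 1, by omega, one_pos, by omega, Or.inl ?_⟩
      rw [hcastn, Prod.mk.injEq]
      constructor <;> norm_num
    rcases lt_or_ge 0 α with hα0 | hα0
    · rcases lt_or_ge β 0 with hβ0 | hβ0
      · obtain ⟨d, q, hd0, hq0, hdq, hle⟩ :=
          quadrant_case n hn a b j1 α (-β) ha1 hb1 hbn hj1 hjT1 hα0 (by linarith)
        refine hcontr ((d:ℝ), (n:ℝ) - (q:ℝ)) ⟨d, q, hd0, hq0, hdq, Or.inl rfl⟩ ?_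
        rw [hf, hf]; linarith [hle]
      · refine hcontr _ hm11 ?_
        rw [hf, hf]
        nlinarith [mul_nonneg (sub_nonneg.2 haR1) (le_of_lt hα0),
          mul_nonneg (sub_nonneg.2 hbR1) hβ0]
    · rcases lt_or_ge 0 β with hβ0 | hβ0
      · rcases lt_or_ge α 0 with hα1 | hα1
        · obtain ⟨d, q, hd0, hq0, hdq, hle⟩ :=
            quadrant_case n hn b a j2 β (-α) hb1 ha1 han hj2 hjT2 hβ0 (by linarith)
          refine hcontr ((n:ℝ) - (q:ℝ), (d:ℝ)) ⟨d, q, hd0, hq0, hdq, Or.inr rfl⟩ ?_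
          rw [hf, hf]; linarith [hle]
        · have hα2 : α = 0 := le_antisymm hα0 hα1
          refine hcontr _ hm11 ?_
          rw [hf, hf, hα2]
          nlinarith [mul_nonneg (sub_nonneg.2 hbR1) (le_of_lt hβ0)]
      · refine hcontr _ hmnn ?_
        rw [hf, hf]
        nlinarith [mul_nonneg (sub_nonneg.2 (by linarith : (a:ℝ) ≤ (n:ℝ) - 1)) (neg_nonneg.2 hα0),
          mul_nonneg (sub_nonneg.2 hbRn) (neg_nonneg.2 hβ0)]
  have hsub : convexHull ℝ (chainSet n) ⊆ convexHull ℝ (modPoints n) :=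
    convexHull_mono (chainSet_subset n hn)
  have hx : ((a:ℝ),(b:ℝ)) ∈ Set.extremePoints ℝ (convexHull ℝ (chainSet n)) :=
    ⟨key, fun y hy z hz hseg => hv'.2 (hsub hy) (hsub hz) hseg⟩
  have hmem := extremePoints_convexHull_subset hx
  obtain ⟨d, q, hd0, hq0, hdq, hp | hp⟩ := hmem
  all_goals {
    rw [Prod.mk.injEq] at hp
    obtain ⟨hp1, hp2⟩ := hp
    have hZ : (d:ℤ) * (q:ℤ) = (n:ℤ) - 1 := by
      have := congrArg (Nat.cast : ℕ → ℤ) hdq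
      push_cast [Nat.cast_sub (show 1 ≤ n by omega)] at this
      exact this
    have hne : (n:ℤ) ≠ 0 := by omega
    have hmax : 1 ≤ max 1 ⌊(Tratio (n - 1) + 3) / 4⌋ := le_max_left _ _
    first
    | · have haD : a = (d:ℤ) := by exact_mod_cast hp1
        have hbQ : b = (n:ℤ) - (q:ℤ) := by
          have : (b:ℝ) = (n:ℝ) - (q:ℝ) := hp2
          exact_mod_cast this
        have haN : a * ((n:ℤ) - b) = 1 * (n:ℤ) - 1 := by
          rw [haD, hbQ]; linear_combination hZ
        have : j1 * (n:ℤ) = 1 * (n:ℤ) := by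
          have := hj1.symm.trans haN; linarith
        have hj1one : j1 = 1 := mul_right_cancel₀ hne this
        linarith [hc1, hmax]
    | · have haD : b = (d:ℤ) := by exact_mod_cast hp2
        have hbQ : a = (n:ℤ) - (q:ℤ) := by
          have : (a:ℝ) = (n:ℝ) - (q:ℝ) := hp1
          exact_mod_cast this
        have haN : b * ((n:ℤ) - a) = 1 * (n:ℤ) - 1 := by
          rw [haD, hbQ]; linear_combination hZ
        have : j2 * (n:ℤ) = 1 * (n:ℤ) := by
          have := hj2.symm.trans haN; linarith
        have hj2one : j2 = 1 := mul_right_cancel₀ hne this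
        linarith [hc2, hmax]
  }
end
end

section
/- For every ε > 0 there exists N such that for all integers n ≥ N, v(n) ≤ T(n−1)·n^{ε}. -/
open Filter MeasureTheory

noncomputable section

lemma Tratio_bddAbove (s : ℕ) (hs : s ≠ 0) :
    BddAbove {r : ℝ | ∃ d e : ℕ, d ∣ s ∧ e ∣ s ∧ d < e ∧
      (∀ f : ℕ, f ∣ s → ¬(d < f ∧ f < e)) ∧ r = (e : ℝ) / (d : ℝ)} := by
  refine ⟨(s:ℝ), ?_⟩
  rintro r ⟨d, e, hd, he, hde, -, rfl⟩
  have hd1 : 1 ≤ d := Nat.one_le_iff_ne_zero.mpr (fun h => hs (Nat.eq_zero_of_zero_dvd (h ▸ hd)))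
  have he1 : e ≤ s := Nat.le_of_dvd (Nat.pos_of_ne_zero hs) he
  have hd1' : (1:ℝ) ≤ (d:ℝ) := by exact_mod_cast hd1
  calc (e:ℝ)/(d:ℝ) ≤ (e:ℝ)/1 := by
        apply div_le_div_of_nonneg_left (by positivity) (by norm_num) hd1'
    _ = (e:ℝ) := div_one _
    _ ≤ (s:ℝ) := by exact_mod_cast he1
  
lemma ratio_le_Tratio (s d e : ℕ) (hs : s ≠ 0) (hd : d ∣ s) (he : e ∣ s) (hde : d < e)
    (hcons : ∀ f : ℕ, f ∣ s → ¬(d < f ∧ f < e)) : (e:ℝ)/(d:ℝ) ≤ Tratio s :=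
  le_csSup (Tratio_bddAbove s hs) ⟨d, e, hd, he, hde, hcons, rfl⟩

lemma two_le_Tratio (s : ℕ) (hs : 2 ≤ s) : (2:ℝ) ≤ Tratio s := by
  have hs1 : s ≠ 1 := by omega
  have hs0 : s ≠ 0 := by omega
  have hp := Nat.minFac_prime hs1
  have h2 : 2 ≤ s.minFac := hp.two_le
  have hcons : ∀ f : ℕ, f ∣ s → ¬(1 < f ∧ f < s.minFac) := by
    rintro f hf ⟨h1f, hfm⟩
    exact absurd (Nat.minFac_le_of_dvd h1f hf) (by omega)
  have := ratio_le_Tratio s 1 s.minFac hs0 (one_dvd s) (Nat.minFac_dvd s)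
    (by omega) hcons
  rw [Nat.cast_one, div_one] at this
  calc (2:ℝ) ≤ (s.minFac : ℝ) := by exact_mod_cast h2
    _ ≤ Tratio s := this

lemma Tratio_le_self (s : ℕ) (hs : 2 ≤ s) : Tratio s ≤ (s:ℝ) := by
  apply csSup_le
  · have hs1 : s ≠ 1 := by omega
    have hp := Nat.minFac_prime hs1
    refine ⟨(s.minFac : ℝ)/1, 1, s.minFac, one_dvd s, Nat.minFac_dvd s, hp.one_lt, ?_, by norm_num⟩
    rintro f hf ⟨h1f, hfm⟩
    exact absurd (Nat.minFac_le_of_dvd h1f hf) (by omega)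
  · rintro r ⟨d, e, hd, he, hde, -, rfl⟩
    have hd1 : 1 ≤ d := Nat.one_le_iff_ne_zero.mpr (fun h => by
      have := Nat.eq_zero_of_zero_dvd (h ▸ hd); omega)
    have he1 : e ≤ s := Nat.le_of_dvd (by omega) he
    have hd1' : (1:ℝ) ≤ (d:ℝ) := by exact_mod_cast hd1
    calc (e:ℝ)/(d:ℝ) ≤ (e:ℝ)/1 := by
          apply div_le_div_of_nonneg_left (by positivity) (by norm_num) hd1'
      _ = (e:ℝ) := div_one _
      _ ≤ (s:ℝ) := by exact_mod_cast he1

/-- Chain point `P_d = (d, n - (n-1)/d)` is in `modPoints n`. -/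
lemma chainPoint_mem (n : ℕ) (hn : 3 ≤ n) (d : ℕ) (hd : d ∣ (n-1)) :
    ((d:ℝ), (n:ℝ) - ((n-1 : ℕ):ℝ)/(d:ℝ)) ∈ modPoints n := by
  have hs0 : (n-1 : ℕ) ≠ 0 := by omega
  have hd1 : 1 ≤ d := Nat.one_le_iff_ne_zero.mpr (fun h => hs0 (Nat.eq_zero_of_zero_dvd (h ▸ hd)))
  have hds : d ≤ n - 1 := Nat.le_of_dvd (by omega) hd
  set c : ℕ := (n-1)/d with hc
  have hdc : d * c = n - 1 := Nat.mul_div_cancel' hd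
  have hc1 : 1 ≤ c := by
    rcases Nat.eq_zero_or_pos c with h | h
    · rw [h, mul_zero] at hdc; omega
    · exact h
  have hcs : c ≤ n - 1 := Nat.le_of_dvd (by omega) ⟨d, by rw [← hdc]; ring⟩
  refine ⟨(d:ℤ), (n:ℤ) - (c:ℤ), by exact_mod_cast hd1, by
      have : (d:ℤ) ≤ ((n-1:ℕ):ℤ) := by exact_mod_cast hds
      omega, by
      have : (c:ℤ) ≤ ((n-1:ℕ):ℤ) := by push_cast; omega
      omega, by
      have : (1:ℤ) ≤ (c:ℤ) := by exact_mod_cast hc1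
      omega, ?_, ?_⟩
  · have hdc' : (d:ℤ) * (c:ℤ) = (n:ℤ) - 1 := by
      have := congrArg (Nat.cast : ℕ → ℤ) hdc
      push_cast at this
      omega
    refine ⟨(d:ℤ) - 1, ?_⟩
    ring_nf
    nlinarith [hdc']
  · have hcr : (c:ℝ) = ((n-1:ℕ):ℝ)/(d:ℝ) := by
      have hdc' : (d:ℝ) * (c:ℝ) = ((n-1:ℕ):ℝ) := by exact_mod_cast hdc
      field_simp [show (d:ℝ) ≠ 0 by positivity] at hdc' ⊢
      linarith
    push_cast
    rw [hcr]

/-- Swapped chain point `Q_f = (n - (n-1)/f, f)` is in `modPoints n`. -/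
lemma chainPoint_mem' (n : ℕ) (hn : 3 ≤ n) (d : ℕ) (hd : d ∣ (n-1)) :
    ((n:ℝ) - ((n-1 : ℕ):ℝ)/(d:ℝ), (d:ℝ)) ∈ modPoints n := by
  obtain ⟨a, b, h1, h2, h3, h4, h5, h6⟩ := chainPoint_mem n hn d hd
  refine ⟨b, a, h3, h4, h1, h2, ?_, ?_⟩
  · rwa [mul_comm]
  · rw [Prod.ext_iff] at h6 ⊢
    exact ⟨h6.2, h6.1⟩

lemma chord1_mem (n : ℕ) (hn : 3 ≤ n) (d e : ℕ) (hd : d ∣ (n-1)) (he : e ∣ (n-1))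
    (hde : d ≤ e) (A : ℝ) (hdA : (d:ℝ) ≤ A) (hAe : A ≤ (e:ℝ)) :
    (A, (n:ℝ) - ((n-1:ℕ):ℝ) * ((d:ℝ) + (e:ℝ) - A)/((d:ℝ)*(e:ℝ))) ∈ modHull n := by
  have hs0 : (n-1 : ℕ) ≠ 0 := by omega
  have hd1 : 1 ≤ d := Nat.one_le_iff_ne_zero.mpr (fun h => hs0 (Nat.eq_zero_of_zero_dvd (h ▸ hd)))
  have he1 : 1 ≤ e := Nat.one_le_iff_ne_zero.mpr (fun h => hs0 (Nat.eq_zero_of_zero_dvd (h ▸ he)))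
  have hd0 : (d:ℝ) ≠ 0 := by positivity
  have he0 : (e:ℝ) ≠ 0 := by positivity
  have hPd := subset_convexHull ℝ (modPoints n) (chainPoint_mem n hn d hd)
  have hPe := subset_convexHull ℝ (modPoints n) (chainPoint_mem n hn e he)
  rcases eq_or_lt_of_le hde with rfl | hlt
  · -- d = e, so A = d
    have hAd : A = (d:ℝ) := le_antisymm hAe hdA
    have : (A, (n:ℝ) - ((n-1:ℕ):ℝ) * ((d:ℝ) + (d:ℝ) - A)/((d:ℝ)*(d:ℝ)))
        = ((d:ℝ), (n:ℝ) - ((n-1:ℕ):ℝ)/(d:ℝ)) := by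
      rw [hAd]
      refine Prod.ext rfl ?_
      simp only
      congr 1
      field_simp
      ring
    rw [this]
    exact hPd
  · have hed0 : (e:ℝ) - (d:ℝ) ≠ 0 := by
      have : (d:ℝ) < (e:ℝ) := by exact_mod_cast hlt
      linarith
    have hedpos : (0:ℝ) < (e:ℝ) - (d:ℝ) := by
      have : (d:ℝ) < (e:ℝ) := by exact_mod_cast hlt
      linarith
    have hl0 : 0 ≤ ((e:ℝ) - A)/((e:ℝ) - d) := by
      apply div_nonneg (by linarith) hedpos.le
    have hm0 : 0 ≤ 1 - ((e:ℝ) - A)/((e:ℝ) - d) := by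
      rw [sub_nonneg, div_le_one hedpos]
      linarith
    have hmem := (convex_convexHull ℝ (modPoints n)) hPd hPe hl0 hm0 (by ring)
    convert hmem using 1
    rfl
    simp only [Prod.smul_mk, Prod.mk_add_mk, smul_eq_mul, Prod.mk.injEq]
    constructor
    · field_simp
      ring
    · field_simp
      ring

lemma chord2_mem (n : ℕ) (hn : 3 ≤ n) (f g : ℕ) (hf : f ∣ (n-1)) (hg : g ∣ (n-1))
    (hfg : f ≤ g) (A : ℝ) (hfA : (f:ℝ)*((n:ℝ) - A) ≤ ((n-1:ℕ):ℝ))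
    (hgA : ((n-1:ℕ):ℝ) ≤ (g:ℝ)*((n:ℝ) - A)) :
    (A, (f:ℝ) + (g:ℝ) - (f:ℝ)*(g:ℝ)*((n:ℝ) - A)/((n-1:ℕ):ℝ)) ∈ modHull n := by
  have hs0 : (n-1 : ℕ) ≠ 0 := by omega
  set S : ℝ := ((n-1:ℕ):ℝ) with hSdef
  have hSpos : (0:ℝ) < S := by rw [hSdef]; exact_mod_cast Nat.pos_of_ne_zero hs0
  have hS0 : S ≠ 0 := hSpos.ne'
  have hf1 : 1 ≤ f := Nat.one_le_iff_ne_zero.mpr (fun h => hs0 (Nat.eq_zero_of_zero_dvd (h ▸ hf)))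
  have hg1 : 1 ≤ g := Nat.one_le_iff_ne_zero.mpr (fun h => hs0 (Nat.eq_zero_of_zero_dvd (h ▸ hg)))
  have hfpos : (0:ℝ) < (f:ℝ) := by exact_mod_cast hf1
  have hgpos : (0:ℝ) < (g:ℝ) := by exact_mod_cast hg1
  have hf0 : (f:ℝ) ≠ 0 := hfpos.ne'
  have hg0 : (g:ℝ) ≠ 0 := hgpos.ne'
  have hQf := subset_convexHull ℝ (modPoints n) (chainPoint_mem' n hn f hf)
  have hQg := subset_convexHull ℝ (modPoints n) (chainPoint_mem' n hn g hg)
  rw [← hSdef] at hQf hQg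
  rcases eq_or_lt_of_le hfg with rfl | hlt
  · have heq : (f:ℝ)*((n:ℝ) - A) = S := le_antisymm hfA hgA
    have hA : A = (n:ℝ) - S/(f:ℝ) := by
      field_simp
      nlinarith [heq]
    have hpt : (A, (f:ℝ) + (f:ℝ) - (f:ℝ)*(f:ℝ)*((n:ℝ) - A)/S)
        = ((n:ℝ) - S/(f:ℝ), (f:ℝ)) := by
      refine Prod.ext hA ?_
      simp only
      rw [show (f:ℝ)*(f:ℝ)*((n:ℝ) - A) = (f:ℝ) * ((f:ℝ)*((n:ℝ)-A)) by ring, heq]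
      field_simp
      norm_num
    rw [hpt]
    exact hQf
  · have hlt' : (f:ℝ) < (g:ℝ) := by exact_mod_cast hlt
    have hgf0 : (g:ℝ) - (f:ℝ) ≠ 0 := by linarith
    set uf : ℝ := (n:ℝ) - S/(f:ℝ) with huf
    set ug : ℝ := (n:ℝ) - S/(g:ℝ) with hug
    have hufg : ug - uf = S*((g:ℝ)-(f:ℝ))/((f:ℝ)*(g:ℝ)) := by
      rw [huf, hug]
      field_simp
      ring
    have hupos : (0:ℝ) < ug - uf := by
      rw [hufg]
      exact div_pos (mul_pos hSpos (by linarith)) (by positivity)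
    have hne : ug - uf ≠ 0 := hupos.ne'
    have hAuf : uf ≤ A := by
      rw [huf, sub_le_iff_le_add, ← sub_le_iff_le_add']
      rw [le_div_iff₀ hfpos]
      nlinarith [hfA]
    have hAug : A ≤ ug := by
      rw [hug, le_sub_iff_add_le, ← le_sub_iff_add_le']
      rw [div_le_iff₀ hgpos]
      nlinarith [hgA]
    have hl0 : 0 ≤ (ug - A)/(ug - uf) := div_nonneg (by linarith) hupos.le
    have hm0 : 0 ≤ 1 - (ug - A)/(ug - uf) := by
      rw [sub_nonneg, div_le_one hupos]
      linarith
    have hmem := (convex_convexHull ℝ (modPoints n)) hQf hQg hl0 hm0 (by ring)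
    convert hmem using 1
    rfl
    simp only [Prod.smul_mk, Prod.mk_add_mk, smul_eq_mul, Prod.mk.injEq]
    constructor
    · field_simp
      ring
    · rw [hufg, div_div_eq_mul_div, hug]
      field_simp
      ring

lemma iarith1 (x y : ℤ) (hx : 1 ≤ x) (hy : 1 ≤ y) : 1 ≤ x*y := by nlinarith

lemma iarith2 (n l : ℤ) (hn : 3 ≤ n) (h : 1 ≤ l*n - 1) : 1 ≤ l := by nlinarith

lemma iarith3 (n l d e : ℤ) (hn : 3 ≤ n) (hd1 : 1 ≤ d) (he1 : 1 ≤ e) (hds : d ≤ n-1)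
    (hG : (l*n-1)*d ≤ (n-1)*e) (hc : e+1 ≤ l*d) : False := by
  nlinarith [mul_le_mul_of_nonneg_right hc (by omega : (0:ℤ) ≤ n)]

lemma iarith4 (l d : ℤ) (hd : 1 ≤ d) (h : l*d ≤ d) : l ≤ 1 := by nlinarith

lemma rarith1 (S d e aa nb : ℝ) (hd1 : 1 ≤ d) (hda : d ≤ aa) (hae : aa ≤ e) (hS : 0 ≤ S)
    (hnb : 0 ≤ nb) (h1 : nb * (d*e) ≤ S * (d + e - aa)) : aa * nb * d ≤ S * e := by
  have ha0 : (0:ℝ) ≤ aa := by linarith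
  have he0 : (0:ℝ) < e := by linarith
  have h2 : aa*(d+e-aa) ≤ e*e := by nlinarith [sq_nonneg (d+e-2*aa)]
  have h3 := mul_le_mul_of_nonneg_left h1 ha0
  have h4 := mul_le_mul_of_nonneg_left h2 hS
  have h6 : (aa*nb*d)*e ≤ (S*e)*e := by nlinarith [h3, h4]
  exact le_of_mul_le_mul_right h6 he0

lemma rarith2 (S ff gg na : ℝ) (hS : 0 < S) (hf : 0 < ff) (hg : 0 < gg) (hna : 0 ≤ na)
    (hfg : ff ≤ gg) : ff*na*(ff+gg - ff*gg*na/S) ≤ S*gg := by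
  rw [← sub_nonneg]
  have hrw : S*gg - ff*na*(ff+gg - ff*gg*na/S)
      = (gg*(ff*na - S)^2 + S*(ff*na)*(gg-ff))/S := by
    field_simp
    ring
  rw [hrw]
  apply div_nonneg _ hS.le
  have h1 : (0:ℝ) ≤ gg*(ff*na - S)^2 := mul_nonneg hg.le (sq_nonneg _)
  have h2 : (0:ℝ) ≤ S*(ff*na)*(gg-ff) := by
    apply mul_nonneg (mul_nonneg hS.le (mul_nonneg hf.le hna))
    linarith
  linarith

set_option maxHeartbeats 1000000 in
lemma key_lemma (n : ℕ) (hn : 3 ≤ n) (p : ℝ × ℝ) (hp : p ∈ modVertices n) :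
    ∃ a b l : ℤ, 1 ≤ a ∧ a ≤ (n:ℤ) - 1 ∧ 1 ≤ b ∧ b ≤ (n:ℤ) - 1 ∧ 1 ≤ l ∧
      (l:ℝ) ≤ Tratio (n-1) ∧ p = ((a:ℝ), (b:ℝ)) ∧
      (a * ((n:ℤ) - b) = l*(n:ℤ) - 1 ∨ ((n:ℤ) - a) * b = l*(n:ℤ) - 1) := by
  have hp' : p ∈ modPoints n := extremePoints_convexHull_subset hp
  obtain ⟨a, b, ha1, ha2, hb1, hb2, hdvd, hpeq⟩ := hp'
  obtain ⟨m, hm⟩ := hdvd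
  obtain ⟨hpA, hpext⟩ := hp
  set s : ℕ := n - 1 with hsdef
  have hs2 : 2 ≤ s := by omega
  have hs0 : s ≠ 0 := by omega
  have hnZ : (3:ℤ) ≤ (n:ℤ) := by exact_mod_cast hn
  have hsZ : (s:ℤ) = (n:ℤ) - 1 := by push_cast [hsdef]; omega
  have hsR : (s:ℝ) = (n:ℝ) - 1 := by
    rw [hsdef]
    push_cast [Nat.cast_sub (by omega : 1 ≤ n)]
    ring
  obtain ⟨A, hAdef⟩ : ∃ x, x = a.toNat := ⟨_, rfl⟩
  have hAa : (A:ℤ) = a := by rw [hAdef]; exact Int.toNat_of_nonneg (by omega)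
  have hA1 : 1 ≤ A := by omega
  have hAs : A ≤ s := by omega
  have hAaR : ((A:ℕ):ℝ) = ((a:ℤ):ℝ) := by exact_mod_cast hAa
  have hT2 : (2:ℝ) ≤ Tratio s := two_le_Tratio s hs2
  -- bracketing divisors d ≤ A ≤ e
  have hDne : (s.divisors.filter (fun x => x ≤ A)).Nonempty :=
    ⟨1, Finset.mem_filter.2 ⟨Nat.mem_divisors.2 ⟨one_dvd s, hs0⟩, hA1⟩⟩
  have hEne : (s.divisors.filter (fun x => A ≤ x)).Nonempty :=
    ⟨s, Finset.mem_filter.2 ⟨Nat.mem_divisors.2 ⟨dvd_rfl, hs0⟩, hAs⟩⟩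
  obtain ⟨d, hddef⟩ : ∃ x, x = (s.divisors.filter (fun x => x ≤ A)).max' hDne := ⟨_, rfl⟩
  obtain ⟨e, hedef⟩ : ∃ x, x = (s.divisors.filter (fun x => A ≤ x)).min' hEne := ⟨_, rfl⟩
  have hd_mem := Finset.mem_filter.1 (hddef ▸ (s.divisors.filter (fun x => x ≤ A)).max'_mem hDne)
  have he_mem := Finset.mem_filter.1 (hedef ▸ (s.divisors.filter (fun x => A ≤ x)).min'_mem hEne)
  have hd_dvd : d ∣ s := (Nat.mem_divisors.1 hd_mem.1).1
  have he_dvd : e ∣ s := (Nat.mem_divisors.1 he_mem.1).1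
  have hdA : d ≤ A := hd_mem.2
  have hAe : A ≤ e := he_mem.2
  have hde : d ≤ e := le_trans hdA hAe
  have hd1 : 1 ≤ d := Nat.one_le_iff_ne_zero.mpr (fun h => hs0 (Nat.eq_zero_of_zero_dvd (h ▸ hd_dvd)))
  have he1 : 1 ≤ e := le_trans hd1 hde
  have hes : e ≤ s := Nat.le_of_dvd (by omega) he_dvd
  have hds : d ≤ s := le_trans hde hes
  have hdmax : ∀ x ∈ s.divisors.filter (fun x => x ≤ A), x ≤ d := fun x hx => hddef ▸ Finset.le_max' _ x hx
  have hemin : ∀ x ∈ s.divisors.filter (fun x => A ≤ x), e ≤ x := fun x hx => hedef ▸ Finset.min'_le _ x hx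
  have hcons_de : d < e → ∀ x : ℕ, x ∣ s → ¬(d < x ∧ x < e) := by
    intro _ x hx ⟨hdx, hxe⟩
    rcases le_or_gt x A with h | h
    · exact absurd (hdmax x (Finset.mem_filter.2 ⟨Nat.mem_divisors.2 ⟨hx, hs0⟩, h⟩)) (by omega)
    · exact absurd (hemin x (Finset.mem_filter.2 ⟨Nat.mem_divisors.2 ⟨hx, hs0⟩, h.le⟩)) (by omega)
  -- bracketing divisors for the lower chain: f*(n-A) ≤ s ≤ g*(n-A)
  have hFne : (s.divisors.filter (fun x => x * (n - A) ≤ s)).Nonempty :=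
    ⟨1, Finset.mem_filter.2 ⟨Nat.mem_divisors.2 ⟨one_dvd s, hs0⟩, by omega⟩⟩
  have hGne : (s.divisors.filter (fun x => s ≤ x * (n - A))).Nonempty :=
    ⟨s, Finset.mem_filter.2 ⟨Nat.mem_divisors.2 ⟨dvd_rfl, hs0⟩, Nat.le_mul_of_pos_right s (by omega)⟩⟩
  obtain ⟨f, hfdef⟩ : ∃ x, x = (s.divisors.filter (fun x => x * (n - A) ≤ s)).max' hFne := ⟨_, rfl⟩
  obtain ⟨g, hgdef⟩ : ∃ x, x = (s.divisors.filter (fun x => s ≤ x * (n - A))).min' hGne := ⟨_, rfl⟩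
  have hf_mem := Finset.mem_filter.1 (hfdef ▸ (s.divisors.filter (fun x => x * (n - A) ≤ s)).max'_mem hFne)
  have hg_mem := Finset.mem_filter.1 (hgdef ▸ (s.divisors.filter (fun x => s ≤ x * (n - A))).min'_mem hGne)
  have hf_dvd : f ∣ s := (Nat.mem_divisors.1 hf_mem.1).1
  have hg_dvd : g ∣ s := (Nat.mem_divisors.1 hg_mem.1).1
  have hfA : f * (n - A) ≤ s := hf_mem.2
  have hgA : s ≤ g * (n - A) := hg_mem.2
  have hfg : f ≤ g := Nat.le_of_mul_le_mul_right (le_trans hfA hgA) (by omega)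
  have hf1 : 1 ≤ f := Nat.one_le_iff_ne_zero.mpr (fun h => hs0 (Nat.eq_zero_of_zero_dvd (h ▸ hf_dvd)))
  have hg1 : 1 ≤ g := le_trans hf1 hfg
  have hgs : g ≤ s := Nat.le_of_dvd (by omega) hg_dvd
  have hfs : f ≤ s := le_trans hfg hgs
  have hfmax : ∀ x ∈ s.divisors.filter (fun x => x * (n - A) ≤ s), x ≤ f := fun x hx => hfdef ▸ Finset.le_max' _ x hx
  have hgmin : ∀ x ∈ s.divisors.filter (fun x => s ≤ x * (n - A)), g ≤ x := fun x hx => hgdef ▸ Finset.min'_le _ x hx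
  have hcons_fg : f < g → ∀ x : ℕ, x ∣ s → ¬(f < x ∧ x < g) := by
    intro _ x hx ⟨hfx, hxg⟩
    rcases le_or_gt (x * (n - A)) s with h | h
    · exact absurd (hfmax x (Finset.mem_filter.2 ⟨Nat.mem_divisors.2 ⟨hx, hs0⟩, h⟩)) (by omega)
    · exact absurd (hgmin x (Finset.mem_filter.2 ⟨Nat.mem_divisors.2 ⟨hx, hs0⟩, h.le⟩)) (by omega)
  -- real versions
  have hdaR : ((d:ℕ):ℝ) ≤ ((a:ℤ):ℝ) := by rw [← hAaR]; exact_mod_cast hdA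
  have haeR : ((a:ℤ):ℝ) ≤ ((e:ℕ):ℝ) := by rw [← hAaR]; exact_mod_cast hAe
  have hfAR : (f:ℝ) * ((n:ℝ) - ((a:ℤ):ℝ)) ≤ ((s:ℕ):ℝ) := by
    have h1 : ((f * (n - A) : ℕ):ℝ) ≤ ((s:ℕ):ℝ) := by exact_mod_cast hfA
    rw [Nat.cast_mul, Nat.cast_sub (by omega : A ≤ n)] at h1
    rw [← hAaR]
    exact h1
  have hgAR : ((s:ℕ):ℝ) ≤ (g:ℝ) * ((n:ℝ) - ((a:ℤ):ℝ)) := by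
    have h1 : ((s:ℕ):ℝ) ≤ ((g * (n - A) : ℕ):ℝ) := by exact_mod_cast hgA
    rw [Nat.cast_mul, Nat.cast_sub (by omega : A ≤ n)] at h1
    rw [← hAaR]
    exact h1
  have htop_mem := chord1_mem n hn d e hd_dvd he_dvd hde ((a:ℤ):ℝ) hdaR haeR
  have hbot_mem := chord2_mem n hn f g hf_dvd hg_dvd hfg ((a:ℤ):ℝ) hfAR hgAR
  set top : ℝ := (n:ℝ) - (s:ℝ) * ((d:ℝ) + (e:ℝ) - ((a:ℤ):ℝ))/((d:ℝ)*(e:ℝ)) with htopdef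
  set bot : ℝ := (f:ℝ) + (g:ℝ) - (f:ℝ)*(g:ℝ)*((n:ℝ) - ((a:ℤ):ℝ))/((s:ℕ):ℝ) with hbotdef
  -- positivity facts in ℝ
  have hdR : (0:ℝ) < (d:ℝ) := by exact_mod_cast hd1
  have heR : (0:ℝ) < (e:ℝ) := by exact_mod_cast he1
  have hfR : (0:ℝ) < (f:ℝ) := by exact_mod_cast hf1
  have hgR : (0:ℝ) < (g:ℝ) := by exact_mod_cast hg1
  have hsRpos : (0:ℝ) < (s:ℝ) := by exact_mod_cast (by omega : 0 < s)
  have hnbR : (0:ℝ) ≤ (n:ℝ) - ((b:ℤ):ℝ) := by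
    have : ((b:ℤ):ℝ) ≤ (n:ℝ) := by exact_mod_cast (by omega : b ≤ (n:ℤ))
    linarith
  have hnaR : (0:ℝ) ≤ (n:ℝ) - ((a:ℤ):ℝ) := by
    have : ((a:ℤ):ℝ) ≤ (n:ℝ) := by exact_mod_cast (by omega : a ≤ (n:ℤ))
    linarith
  -- dichotomy
  rcases le_or_gt top ((b:ℤ):ℝ) with hcase1 | hmid1
  · -- upper case: a*(n-b) = l*n - 1 with l ≤ T
    have heq : a * ((n:ℤ) - b) = (a - m)*(n:ℤ) - 1 := by linear_combination -hm
    have hab : 1 ≤ a * ((n:ℤ) - b) := iarith1 a ((n:ℤ) - b) ha1 (by omega)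
    have hl1 : 1 ≤ a - m := iarith2 (n:ℤ) (a - m) hnZ (heq ▸ hab)
    refine ⟨a, b, a - m, ha1, ha2, hb1, hb2, hl1, ?_, hpeq, Or.inl heq⟩
    -- real bound : a*(n-b)*d ≤ s*e
    have h1 : ((n:ℝ) - ((b:ℤ):ℝ)) * ((d:ℝ)*(e:ℝ)) ≤ (s:ℝ) * ((d:ℝ) + (e:ℝ) - ((a:ℤ):ℝ)) := by
      rw [← le_div_iff₀ (by positivity)]
      rw [htopdef] at hcase1
      linarith
    have hd1R : (1:ℝ) ≤ (d:ℝ) := by exact_mod_cast hd1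
    have hG : ((a:ℤ):ℝ)*((n:ℝ) - ((b:ℤ):ℝ))*(d:ℝ) ≤ (s:ℝ)*(e:ℝ) :=
      rarith1 (s:ℝ) (d:ℝ) (e:ℝ) ((a:ℤ):ℝ) ((n:ℝ) - ((b:ℤ):ℝ)) hd1R hdaR haeR hsRpos.le hnbR h1
    have hGZ : (a*((n:ℤ)-b))*(d:ℤ) ≤ ((n:ℤ)-1)*(e:ℤ) := by
      rw [hsR] at hG
      exact_mod_cast hG
    rw [heq] at hGZ
    have hld : (a - m) * (d:ℤ) ≤ (e:ℤ) := by
      by_contra hc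
      push_neg at hc
      exact iarith3 (n:ℤ) (a-m) (d:ℤ) (e:ℤ) hnZ (by exact_mod_cast hd1) (by exact_mod_cast he1)
        (by rw [← hsZ]; exact_mod_cast hds) hGZ hc
    rcases eq_or_lt_of_le hde with hdeq | hdlt
    · have hle1 : a - m ≤ 1 := iarith4 (a-m) (e:ℤ) (by exact_mod_cast he1) (by rw [hdeq] at hld; exact hld)
      have : a - m = 1 := le_antisymm hle1 hl1
      rw [this]
      norm_num
      linarith
    · have hrat := ratio_le_Tratio s d e hs0 hd_dvd he_dvd hdlt (hcons_de hdlt)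
      have hcast : ((a - m : ℤ):ℝ) ≤ (e:ℝ)/(d:ℝ) := by
        rw [le_div_iff₀ hdR]
        exact_mod_cast hld
      linarith
  rcases le_or_gt ((b:ℤ):ℝ) bot with hcase2 | hmid2
  · -- lower case: (n-a)*b = l*n - 1 with l ≤ T
    have heq : ((n:ℤ) - a) * b = (b - m)*(n:ℤ) - 1 := by linear_combination -hm
    have hab : 1 ≤ ((n:ℤ) - a) * b := iarith1 ((n:ℤ) - a) b (by omega) hb1
    have hl1 : 1 ≤ b - m := iarith2 (n:ℤ) (b - m) hnZ (heq ▸ hab)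
    refine ⟨a, b, b - m, ha1, ha2, hb1, hb2, hl1, ?_, hpeq, Or.inr heq⟩
    have hb0R : (0:ℝ) ≤ ((b:ℤ):ℝ) := by exact_mod_cast (by omega : (0:ℤ) ≤ b)
    have hfgR : (f:ℝ) ≤ (g:ℝ) := by exact_mod_cast hfg
    have hkey := rarith2 (s:ℝ) (f:ℝ) (g:ℝ) ((n:ℝ) - ((a:ℤ):ℝ)) hsRpos hfR hgR hnaR hfgR
    rw [hbotdef] at hcase2
    have hG : (f:ℝ)*((n:ℝ) - ((a:ℤ):ℝ))*((b:ℤ):ℝ) ≤ (s:ℝ)*(g:ℝ) := by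
      have hw2 := mul_le_mul_of_nonneg_left hcase2 (mul_nonneg hfR.le hnaR)
      calc (f:ℝ)*((n:ℝ) - ((a:ℤ):ℝ))*((b:ℤ):ℝ)
          = (f:ℝ)*((n:ℝ) - ((a:ℤ):ℝ))*((b:ℤ):ℝ) := rfl
        _ ≤ (f:ℝ)*((n:ℝ) - ((a:ℤ):ℝ))*((f:ℝ) + (g:ℝ) - (f:ℝ)*(g:ℝ)*((n:ℝ) - ((a:ℤ):ℝ))/((s:ℕ):ℝ)) := by
            have := mul_le_mul_of_nonneg_left hcase2 (mul_nonneg hfR.le hnaR)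
            calc (f:ℝ)*((n:ℝ) - ((a:ℤ):ℝ))*((b:ℤ):ℝ)
                = ((f:ℝ)*((n:ℝ) - ((a:ℤ):ℝ)))*((b:ℤ):ℝ) := by ring
              _ ≤ ((f:ℝ)*((n:ℝ) - ((a:ℤ):ℝ)))*((f:ℝ) + (g:ℝ) - (f:ℝ)*(g:ℝ)*((n:ℝ) - ((a:ℤ):ℝ))/((s:ℕ):ℝ)) := this
              _ = (f:ℝ)*((n:ℝ) - ((a:ℤ):ℝ))*((f:ℝ) + (g:ℝ) - (f:ℝ)*(g:ℝ)*((n:ℝ) - ((a:ℤ):ℝ))/((s:ℕ):ℝ)) := by ring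
        _ ≤ (s:ℝ)*(g:ℝ) := hkey
    have hGZ : ((f:ℤ))*(((n:ℤ)-a)*b) ≤ ((n:ℤ)-1)*(g:ℤ) := by
      rw [hsR] at hG
      have hG' : ((f:ℝ))*((((n:ℝ)) - ((a:ℤ):ℝ))*((b:ℤ):ℝ)) ≤ ((n:ℝ)-1)*(g:ℝ) := by linarith [hG]
      exact_mod_cast hG'
    have hGZ' : ((b - m)*(n:ℤ) - 1)*(f:ℤ) ≤ ((n:ℤ)-1)*(g:ℤ) := by
      rw [← heq]
      linarith [hGZ, (by ring : ((n:ℤ) - a) * b * (f:ℤ) = (f:ℤ)*(((n:ℤ)-a)*b))]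
    have hlf : (b - m) * (f:ℤ) ≤ (g:ℤ) := by
      by_contra hc
      push_neg at hc
      exact iarith3 (n:ℤ) (b-m) (f:ℤ) (g:ℤ) hnZ (by exact_mod_cast hf1) (by exact_mod_cast hg1)
        (by rw [← hsZ]; exact_mod_cast hfs) hGZ' hc
    rcases eq_or_lt_of_le hfg with hfeq | hflt
    · have hle1 : b - m ≤ 1 := iarith4 (b-m) (g:ℤ) (by exact_mod_cast hg1) (by rw [hfeq] at hlf; exact hlf)
      have : b - m = 1 := le_antisymm hle1 hl1
      rw [this]
      norm_num
      linarith
    · have hrat := ratio_le_Tratio s f g hs0 hf_dvd hg_dvd hflt (hcons_fg hflt)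
      have hcast : ((b - m : ℤ):ℝ) ≤ (g:ℝ)/(f:ℝ) := by
        rw [le_div_iff₀ hfR]
        exact_mod_cast hlf
      linarith
  -- middle case : contradiction with extremality
  exfalso
  have hbotlt : bot < ((b:ℤ):ℝ) := hmid2
  have htoplt : ((b:ℤ):ℝ) < top := hmid1
  have hne : top - bot ≠ 0 := by linarith
  have hseg : p ∈ openSegment ℝ (((a:ℤ):ℝ), bot) (((a:ℤ):ℝ), top) := by
    refine ⟨(top - ((b:ℤ):ℝ))/(top - bot), (((b:ℤ):ℝ) - bot)/(top - bot), ?_, ?_, ?_, ?_⟩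
    · apply div_pos (by linarith) (by linarith)
    · apply div_pos (by linarith) (by linarith)
    · field_simp
      ring
    · rw [hpeq]
      simp only [Prod.smul_mk, Prod.mk_add_mk, smul_eq_mul, Prod.mk.injEq]
      constructor
      · field_simp
        ring
      · field_simp
        ring
  have hext := hpext hbot_mem htop_mem hseg
  have hboteq : bot = ((b:ℤ):ℝ) := by
    have h1 := hext
    rw [hpeq] at h1
    exact (Prod.ext_iff.1 h1).2
  linarith

lemma count_per_l (n : ℕ) (hn : 3 ≤ n) (l : ℤ) (hl : 1 ≤ l) :
    ((Finset.Icc (1:ℤ) ((n:ℤ)-1) ×ˢ Finset.Icc (1:ℤ) ((n:ℤ)-1)).filter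
      (fun q => q.1*((n:ℤ)-q.2) = l*(n:ℤ)-1 ∨ ((n:ℤ)-q.1)*q.2 = l*(n:ℤ)-1)).card
    ≤ 2 * ((l*(n:ℤ)-1).toNat.divisors.card) := by
  classical
  have hnZ : (3:ℤ) ≤ (n:ℤ) := by exact_mod_cast hn
  have hm2 : (2:ℤ) ≤ l*(n:ℤ)-1 := by nlinarith
  set m : ℕ := (l*(n:ℤ)-1).toNat with hmdef
  have hmZ : (m:ℤ) = l*(n:ℤ)-1 := Int.toNat_of_nonneg (by omega)
  have hm0 : m ≠ 0 := by omega
  rw [Finset.filter_or]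
  refine le_trans (Finset.card_union_le _ _) ?_
  rw [two_mul]
  have h1 : ((Finset.Icc (1:ℤ) ((n:ℤ)-1) ×ˢ Finset.Icc (1:ℤ) ((n:ℤ)-1)).filter
      (fun q => q.1*((n:ℤ)-q.2) = l*(n:ℤ)-1)).card ≤ m.divisors.card := by
    apply Finset.card_le_card_of_injOn (fun q => q.1.toNat)
    · intro q hq
      rw [Finset.mem_coe, Finset.mem_filter, Finset.mem_product, Finset.mem_Icc, Finset.mem_Icc] at hq
      obtain ⟨⟨⟨hq11, hq12⟩, hq21, hq22⟩, heq⟩ := hq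
      refine Nat.mem_divisors.2 ⟨?_, hm0⟩
      rw [← Int.natCast_dvd_natCast, Int.toNat_of_nonneg (by omega), hmZ, ← heq]
      exact Dvd.intro _ rfl
    · intro q hq q' hq' hqq
      rw [Finset.mem_coe, Finset.mem_filter, Finset.mem_product, Finset.mem_Icc, Finset.mem_Icc] at hq hq'
      obtain ⟨⟨⟨hq11, hq12⟩, hq21, hq22⟩, heq⟩ := hq
      obtain ⟨⟨⟨hq11', hq12'⟩, hq21', hq22'⟩, heq'⟩ := hq'
      have h1 : q.1 = q'.1 := by
        have := congrArg (fun x : ℕ => (x:ℤ)) hqq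
        simp only at this
        rwa [Int.toNat_of_nonneg (by omega), Int.toNat_of_nonneg (by omega)] at this
      have h2 : q.2 = q'.2 := by
        rw [← heq', ← h1] at heq
        have hne : q.1 ≠ 0 := by omega
        have := mul_left_cancel₀ hne heq
        omega
      exact Prod.ext h1 h2
  have h2 : ((Finset.Icc (1:ℤ) ((n:ℤ)-1) ×ˢ Finset.Icc (1:ℤ) ((n:ℤ)-1)).filter
      (fun q => ((n:ℤ)-q.1)*q.2 = l*(n:ℤ)-1)).card ≤ m.divisors.card := by
    apply Finset.card_le_card_of_injOn (fun q => ((n:ℤ)-q.1).toNat)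
    · intro q hq
      rw [Finset.mem_coe, Finset.mem_filter, Finset.mem_product, Finset.mem_Icc, Finset.mem_Icc] at hq
      obtain ⟨⟨⟨hq11, hq12⟩, hq21, hq22⟩, heq⟩ := hq
      refine Nat.mem_divisors.2 ⟨?_, hm0⟩
      rw [← Int.natCast_dvd_natCast, Int.toNat_of_nonneg (by omega), hmZ, ← heq]
      exact Dvd.intro _ rfl
    · intro q hq q' hq' hqq
      rw [Finset.mem_coe, Finset.mem_filter, Finset.mem_product, Finset.mem_Icc, Finset.mem_Icc] at hq hq'
      obtain ⟨⟨⟨hq11, hq12⟩, hq21, hq22⟩, heq⟩ := hq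
      obtain ⟨⟨⟨hq11', hq12'⟩, hq21', hq22'⟩, heq'⟩ := hq'
      have h1 : q.1 = q'.1 := by
        have := congrArg (fun x : ℕ => (x:ℤ)) hqq
        simp only at this
        rw [Int.toNat_of_nonneg (by omega), Int.toNat_of_nonneg (by omega)] at this
        omega
      have h2 : q.2 = q'.2 := by
        rw [← heq', ← h1] at heq
        have hne : (n:ℤ) - q.1 ≠ 0 := by omega
        exact mul_left_cancel₀ hne heq
      exact Prod.ext h1 h2
  omega


lemma prime_factor_bound (ε : ℝ) (hε : 0 < ε) (p : ℕ) (hp : p.Prime) (α : ℕ) :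
    ((α : ℝ) + 1) ≤ (if (p : ℝ) < (2:ℝ) ^ (1/ε) then max 1 (1/(ε * Real.log 2)) else 1)
      * ((p:ℝ) ^ (α:ℕ)) ^ ε := by
  have hp2 : (2:ℝ) ≤ (p:ℝ) := by exact_mod_cast hp.two_le
  have hppos : (0:ℝ) < p := by linarith
  have hrw : ((p:ℝ) ^ (α:ℕ)) ^ ε = ((p:ℝ) ^ ε) ^ (α:ℕ) := by
    rw [← Real.rpow_natCast (p:ℝ) α, ← Real.rpow_natCast ((p:ℝ)^ε) α,
      ← Real.rpow_mul hppos.le, ← Real.rpow_mul hppos.le, mul_comm]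
  rw [hrw]
  split_ifs with h
  · -- small prime case
    have hlog : (0:ℝ) < Real.log 2 := Real.log_pos (by norm_num)
    have hKpos : (0:ℝ) < max 1 (1/(ε * Real.log 2)) := lt_of_lt_of_le one_pos (le_max_left _ _)
    have h1 : ((p:ℝ) ^ ε) ^ (α:ℕ) ≥ ((2:ℝ) ^ ε) ^ (α:ℕ) := by
      apply pow_le_pow_left₀ (Real.rpow_nonneg (by norm_num) _)
      exact Real.rpow_le_rpow (by norm_num) hp2 hε.le
    have h2 : ((2:ℝ) ^ ε) ^ (α:ℕ) ≥ 1 + ε * Real.log 2 * α := by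
      have : ((2:ℝ) ^ ε) ^ (α:ℕ) = Real.exp (ε * Real.log 2 * α) := by
        rw [← Real.rpow_natCast ((2:ℝ)^ε) α, ← Real.rpow_mul (by norm_num), Real.rpow_def_of_pos (by norm_num)]
        ring_nf
      rw [this]
      have := Real.add_one_le_exp (ε * Real.log 2 * α)
      linarith
    have hK : max 1 (1/(ε * Real.log 2)) * (1 + ε * Real.log 2 * α) ≥ (α:ℝ) + 1 := by
      have hcpos : 0 < ε * Real.log 2 := by positivity
      have hKc : max 1 (1/(ε * Real.log 2)) * (ε * Real.log 2) ≥ 1 := by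
        rw [ge_iff_le, ← div_le_iff₀ hcpos]
        simpa [one_div] using le_max_right (1:ℝ) (1/(ε * Real.log 2))
      have hK1 : (1:ℝ) ≤ max 1 (1/(ε * Real.log 2)) := le_max_left _ _
      have hα : (0:ℝ) ≤ (α:ℝ) := Nat.cast_nonneg α
      nlinarith
    calc ((α : ℝ) + 1) ≤ max 1 (1/(ε * Real.log 2)) * (1 + ε * Real.log 2 * α) := hK
      _ ≤ max 1 (1/(ε * Real.log 2)) * ((2:ℝ) ^ ε) ^ (α:ℕ) := by
          apply mul_le_mul_of_nonneg_left h2 hKpos.le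
      _ ≤ _ := by apply mul_le_mul_of_nonneg_left h1 hKpos.le
  · -- large prime: p^ε ≥ 2
    push_neg at h
    have h2 : (2:ℝ) ≤ (p:ℝ) ^ ε := by
      have := Real.rpow_le_rpow (Real.rpow_nonneg (by norm_num) _) h hε.le
      rwa [← Real.rpow_mul (by norm_num), one_div_mul_cancel hε.ne', Real.rpow_one] at this
    have : ((α:ℝ) + 1) ≤ (2:ℝ) ^ (α:ℕ) := by
      exact_mod_cast (Nat.lt_two_pow_self (n := α))
    rw [one_mul]
    calc ((α:ℝ)+1) ≤ (2:ℝ)^(α:ℕ) := this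
      _ ≤ ((p:ℝ)^ε)^(α:ℕ) := pow_le_pow_left₀ (by norm_num) h2 α

lemma divisor_bound (ε : ℝ) (hε : 0 < ε) :
    ∃ C : ℝ, 1 ≤ C ∧ ∀ m : ℕ, m ≠ 0 → (m.divisors.card : ℝ) ≤ C * (m:ℝ) ^ ε := by
  classical
  set K : ℝ := max 1 (1/(ε * Real.log 2)) with hKdef
  have hK1 : 1 ≤ K := le_max_left _ _
  set B : ℕ := ⌊(2:ℝ) ^ (1/ε)⌋₊ + 1 with hBdef
  refine ⟨K ^ B, one_le_pow₀ hK1, ?_⟩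
  intro m hm
  set P := m.primeFactors with hP
  have hα : ∀ p : ℕ, (0:ℝ) ≤ (p:ℝ) ^ (m.factorization p : ℕ) := fun p => by positivity
  have hcard : (m.divisors.card : ℝ) = ∏ p ∈ P, ((m.factorization p : ℝ) + 1) := by
    rw [Nat.card_divisors hm]
    push_cast
    rfl
  have hmnat : ∏ p ∈ P, p ^ m.factorization p = m := by
    rw [hP, ← Nat.support_factorization]
    exact Nat.factorization_prod_pow_eq_self hm
  have hmprod : (m : ℝ) = ∏ p ∈ P, (p:ℝ) ^ (m.factorization p : ℕ) := by
    conv_lhs => rw [← hmnat]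
    push_cast
    rfl
  have hrpow : (m:ℝ) ^ ε = ∏ p ∈ P, ((p:ℝ) ^ (m.factorization p : ℕ)) ^ ε := by
    rw [hmprod, ← Real.finset_prod_rpow P _ (fun p _ => hα p)]
  have step1 : (m.divisors.card : ℝ) ≤
      ∏ p ∈ P, ((if (p:ℝ) < (2:ℝ) ^ (1/ε) then K else 1) * ((p:ℝ) ^ (m.factorization p : ℕ)) ^ ε) := by
    rw [hcard]
    apply Finset.prod_le_prod
    · intro p _; positivity
    · intro p hp
      exact prime_factor_bound ε hε p (Nat.prime_of_mem_primeFactors hp) _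
  rw [Finset.prod_mul_distrib] at step1
  have step2 : (∏ p ∈ P, (if (p:ℝ) < (2:ℝ) ^ (1/ε) then K else 1)) ≤ K ^ B := by
    rw [Finset.prod_ite, Finset.prod_const, Finset.prod_const, one_pow, mul_one]
    apply pow_le_pow_right₀ hK1
    refine le_trans (Finset.card_le_card ?_) (Finset.card_range B).le
    intro p hp
    rw [Finset.mem_filter] at hp
    refine Finset.mem_range.mpr ?_
    rw [hBdef]
    exact Nat.lt_succ_of_le (Nat.le_floor hp.2.le)
  calc (m.divisors.card : ℝ)
      ≤ (∏ p ∈ P, (if (p:ℝ) < (2:ℝ) ^ (1/ε) then K else 1)) *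
        ∏ p ∈ P, ((p:ℝ) ^ (m.factorization p : ℕ)) ^ ε := step1
    _ ≤ K ^ B * (m:ℝ) ^ ε := by
        rw [hrpow]
        apply mul_le_mul_of_nonneg_right step2
        positivity

theorem stmt18 (ε : ℝ) (hε : 0 < ε) :
    ∃ N : ℕ, ∀ n : ℕ, N ≤ n → (numVertices n : ℝ) ≤ Tratio (n - 1) * (n : ℝ) ^ ε := by
  classical
  obtain ⟨C, hC1, hCb⟩ := divisor_bound (ε/4) (by positivity)
  have h2C0 : (0:ℝ) < 2*C := by linarith
  refine ⟨⌈(2*C)^((2:ℝ)/ε)⌉₊ + 3, fun n hn => ?_⟩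
  have hn3 : 3 ≤ n := by omega
  set s : ℕ := n - 1 with hsdef
  have hs2 : 2 ≤ s := by omega
  have hs0 : s ≠ 0 := by omega
  have hT2 : (2:ℝ) ≤ Tratio s := two_le_Tratio s hs2
  have hTs : Tratio s ≤ (s:ℝ) := Tratio_le_self s hs2
  have hnR1 : (1:ℝ) ≤ (n:ℝ) := by exact_mod_cast (by omega : 1 ≤ n)
  have hnRpos : (0:ℝ) < (n:ℝ) := by linarith
  -- 2C ≤ n^(ε/2)
  have h2C : 2*C ≤ (n:ℝ)^(ε/2) := by
    have hx : (2*C)^((2:ℝ)/ε) ≤ (n:ℝ) := by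
      calc (2*C)^((2:ℝ)/ε) ≤ (⌈(2*C)^((2:ℝ)/ε)⌉₊ : ℝ) := Nat.le_ceil _
        _ ≤ (n:ℝ) := by exact_mod_cast (by omega : ⌈(2*C)^((2:ℝ)/ε)⌉₊ ≤ n)
    have hy := Real.rpow_le_rpow (by positivity) hx (by positivity : (0:ℝ) ≤ ε/2)
    rwa [← Real.rpow_mul h2C0.le, show (2:ℝ)/ε * (ε/2) = 1 by field_simp, Real.rpow_one] at hy
  set L : ℤ := ⌊Tratio s⌋ with hLdef
  have hL1 : 1 ≤ L := by
    rw [hLdef]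
    exact le_trans (by norm_num : (1:ℤ) ≤ 2) (Int.le_floor.2 (by exact_mod_cast hT2))
  have hL2 : (L:ℝ) ≤ Tratio s := Int.floor_le _
  have hLs : L ≤ (s:ℤ) := by exact_mod_cast le_trans hL2 hTs
  set bigF : Finset (ℝ × ℝ) := ((Finset.Icc (1:ℤ) L).biUnion (fun l =>
      (Finset.Icc (1:ℤ) ((n:ℤ)-1) ×ˢ Finset.Icc (1:ℤ) ((n:ℤ)-1)).filter
        (fun q => q.1*((n:ℤ)-q.2) = l*(n:ℤ)-1 ∨ ((n:ℤ)-q.1)*q.2 = l*(n:ℤ)-1))).image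
        (fun q : ℤ×ℤ => ((q.1:ℝ),(q.2:ℝ))) with hbigF
  have hsub : modVertices n ⊆ ↑bigF := by
    intro p hp
    obtain ⟨a, b, l, ha1, ha2, hb1, hb2, hl1, hlT, hpeq, hor⟩ := key_lemma n hn3 p hp
    refine Finset.mem_coe.2 (Finset.mem_image.2 ⟨(a, b), ?_, hpeq.symm⟩)
    refine Finset.mem_biUnion.2 ⟨l, Finset.mem_Icc.2 ⟨hl1, ?_⟩, ?_⟩
    · rw [hLdef]
      exact Int.le_floor.2 hlT
    · exact Finset.mem_filter.2 ⟨Finset.mem_product.2 ⟨Finset.mem_Icc.2 ⟨ha1, ha2⟩,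
        Finset.mem_Icc.2 ⟨hb1, hb2⟩⟩, hor⟩
  have hv1 : numVertices n ≤ bigF.card := by
    rw [numVertices, ← Set.ncard_coe_finset bigF]
    exact Set.ncard_le_ncard hsub (Finset.finite_toSet _)
  have hv2 : bigF.card ≤ ∑ l ∈ Finset.Icc (1:ℤ) L,
      ((Finset.Icc (1:ℤ) ((n:ℤ)-1) ×ˢ Finset.Icc (1:ℤ) ((n:ℤ)-1)).filter
        (fun q => q.1*((n:ℤ)-q.2) = l*(n:ℤ)-1 ∨ ((n:ℤ)-q.1)*q.2 = l*(n:ℤ)-1)).card :=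
    le_trans (Finset.card_image_le) (Finset.card_biUnion_le)
  -- bound each summand in ℝ
  have hterm : ∀ l ∈ Finset.Icc (1:ℤ) L,
      (((Finset.Icc (1:ℤ) ((n:ℤ)-1) ×ˢ Finset.Icc (1:ℤ) ((n:ℤ)-1)).filter
        (fun q => q.1*((n:ℤ)-q.2) = l*(n:ℤ)-1 ∨ ((n:ℤ)-q.1)*q.2 = l*(n:ℤ)-1)).card : ℝ)
      ≤ 2*C*(n:ℝ)^(ε/2) := by
    intro l hl
    rw [Finset.mem_Icc] at hl
    obtain ⟨hl1, hlL⟩ := hl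
    have hcount := count_per_l n hn3 l hl1
    set m : ℕ := (l*(n:ℤ)-1).toNat with hmdef
    have hnZ : (3:ℤ) ≤ (n:ℤ) := by exact_mod_cast hn3
    have hm2 : (2:ℤ) ≤ l*(n:ℤ)-1 := by nlinarith
    have hmZ : (m:ℤ) = l*(n:ℤ)-1 := Int.toNat_of_nonneg (by omega)
    have hm0 : m ≠ 0 := by omega
    have hmn2 : m ≤ n^2 := by
      have hsn : (s:ℤ) ≤ (n:ℤ) := by exact_mod_cast (by omega : s ≤ n)
      have h1 : (m:ℤ) ≤ (n:ℤ)^2 := by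
        rw [hmZ]
        nlinarith [hLs, hlL, hsn]
      exact_mod_cast h1
    have hd1 : (m.divisors.card : ℝ) ≤ C * (m:ℝ)^(ε/4) := hCb m hm0
    have hd2 : (m:ℝ)^(ε/4) ≤ (n:ℝ)^(ε/2) := by
      have hcast : (m:ℝ) ≤ ((n:ℝ))^(2:ℕ) := by exact_mod_cast hmn2
      calc (m:ℝ)^(ε/4) ≤ (((n:ℝ))^(2:ℕ))^(ε/4) :=
            Real.rpow_le_rpow (by positivity) hcast (by positivity)
        _ = (n:ℝ)^(ε/2) := by
            rw [← Real.rpow_natCast (n:ℝ) 2, ← Real.rpow_mul hnRpos.le]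
            norm_num
            ring_nf
    calc (((Finset.Icc (1:ℤ) ((n:ℤ)-1) ×ˢ Finset.Icc (1:ℤ) ((n:ℤ)-1)).filter
        (fun q => q.1*((n:ℤ)-q.2) = l*(n:ℤ)-1 ∨ ((n:ℤ)-q.1)*q.2 = l*(n:ℤ)-1)).card : ℝ)
        ≤ (2 * (m.divisors.card) : ℕ) := by exact_mod_cast hcount
      _ = 2 * (m.divisors.card : ℝ) := by push_cast; ring
      _ ≤ 2 * (C * (m:ℝ)^(ε/4)) := by linarith
      _ ≤ 2 * (C * (n:ℝ)^(ε/2)) := by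
          have := mul_le_mul_of_nonneg_left hd2 (by linarith : (0:ℝ) ≤ C)
          linarith
      _ = 2*C*(n:ℝ)^(ε/2) := by ring
  have hsum : ((∑ l ∈ Finset.Icc (1:ℤ) L,
      ((Finset.Icc (1:ℤ) ((n:ℤ)-1) ×ˢ Finset.Icc (1:ℤ) ((n:ℤ)-1)).filter
        (fun q => q.1*((n:ℤ)-q.2) = l*(n:ℤ)-1 ∨ ((n:ℤ)-q.1)*q.2 = l*(n:ℤ)-1)).card : ℕ) : ℝ)
      ≤ (L:ℝ) * (2*C*(n:ℝ)^(ε/2)) := by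
    push_cast
    calc ∑ l ∈ Finset.Icc (1:ℤ) L,
        (((Finset.Icc (1:ℤ) ((n:ℤ)-1) ×ˢ Finset.Icc (1:ℤ) ((n:ℤ)-1)).filter
          (fun q => q.1*((n:ℤ)-q.2) = l*(n:ℤ)-1 ∨ ((n:ℤ)-q.1)*q.2 = l*(n:ℤ)-1)).card : ℝ)
        ≤ ∑ _l ∈ Finset.Icc (1:ℤ) L, 2*C*(n:ℝ)^(ε/2) := Finset.sum_le_sum hterm
      _ = ((Finset.Icc (1:ℤ) L).card : ℝ) * (2*C*(n:ℝ)^(ε/2)) := by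
          rw [Finset.sum_const, nsmul_eq_mul]
      _ ≤ (L:ℝ) * (2*C*(n:ℝ)^(ε/2)) := by
          have hcard : (Finset.Icc (1:ℤ) L).card = L.toNat := by
            rw [Int.card_Icc]
            congr 1
            omega
          rw [hcard]
          have : ((L.toNat : ℕ) : ℝ) = (L:ℝ) := by exact_mod_cast Int.toNat_of_nonneg (by omega)
          rw [this]
  -- final chain
  have hrpow_half : (0:ℝ) ≤ (n:ℝ)^(ε/2) := by positivity
  have hfin : (L:ℝ) * (2*C*(n:ℝ)^(ε/2)) ≤ Tratio s * (n:ℝ)^ε := by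
    have h1 : 2*C*(n:ℝ)^(ε/2) ≤ (n:ℝ)^(ε/2) * (n:ℝ)^(ε/2) :=
      mul_le_mul_of_nonneg_right h2C hrpow_half
    have h2 : (n:ℝ)^(ε/2) * (n:ℝ)^(ε/2) = (n:ℝ)^ε := by
      rw [← Real.rpow_add hnRpos]
      norm_num
    have h3 : 2*C*(n:ℝ)^(ε/2) ≤ (n:ℝ)^ε := by rw [← h2]; exact h1
    have hL0 : (0:ℝ) ≤ (L:ℝ) := by exact_mod_cast (by omega : (0:ℤ) ≤ L)
    calc (L:ℝ) * (2*C*(n:ℝ)^(ε/2)) ≤ (L:ℝ) * (n:ℝ)^ε := mul_le_mul_of_nonneg_left h3 hL0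
      _ ≤ Tratio s * (n:ℝ)^ε := mul_le_mul_of_nonneg_right hL2 (by positivity)
  calc (numVertices n : ℝ) ≤ ((∑ l ∈ Finset.Icc (1:ℤ) L,
      ((Finset.Icc (1:ℤ) ((n:ℤ)-1) ×ˢ Finset.Icc (1:ℤ) ((n:ℤ)-1)).filter
        (fun q => q.1*((n:ℤ)-q.2) = l*(n:ℤ)-1 ∨ ((n:ℤ)-q.1)*q.2 = l*(n:ℤ)-1)).card : ℕ) : ℝ) := by
        exact_mod_cast le_trans hv1 hv2
    _ ≤ (L:ℝ) * (2*C*(n:ℝ)^(ε/2)) := hsum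
    _ ≤ Tratio s * (n:ℝ)^ε := hfin
end
end
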